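/- arXiv:1811.03996 — 8 statements merged into one kernel-verified Lean document; each statement's English description precedes it below -/
import Mathlib

section
/- Let n divide m, let F be the m×m normalized DFT matrix, P = {m/n, 2m/n, …, m}, and Q = {l+1, …, l+n} (interpreted circularly mod m) for some l. Then ‖D_P F D_Q F*‖_{2→2} = √(n/m). -/
open scoped BigOperators Matrix Classical

noncomputable def vnorm2 {m : ℕ} (x : Fin m → ℂ) : ℝ :=
  Real.sqrt (∑ i, ‖x i‖ ^ 2)

noncomputable def vnorm1 {m : ℕ} (x : Fin m → ℂ) : ℝ :=
  ∑ i, ‖x i‖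

noncomputable def opnorm2 {m n : ℕ} (A : Matrix (Fin m) (Fin n) ℂ) : ℝ :=
  sSup {c | ∃ x : Fin n → ℂ, vnorm2 x = 1 ∧ c = vnorm2 (A.mulVec x)}

noncomputable def opnorm1 {m n : ℕ} (A : Matrix (Fin m) (Fin n) ℂ) : ℝ :=
  sSup {c | ∃ x : Fin n → ℂ, vnorm1 x = 1 ∧ c = vnorm1 (A.mulVec x)}

noncomputable def frobNorm {m n : ℕ} (A : Matrix (Fin m) (Fin n) ℂ) : ℝ :=
  Real.sqrt (∑ i, ∑ j, ‖A i j‖ ^ 2)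

def Dmat {m : ℕ} (P : Finset (Fin m)) : Matrix (Fin m) (Fin m) ℂ :=
  Matrix.diagonal (fun i => if i ∈ P then 1 else 0)

noncomputable def dft (m : ℕ) : Matrix (Fin m) (Fin m) ℂ :=
  fun k l => (1 / Real.sqrt m : ℝ) *
    Complex.exp (-2 * Real.pi * Complex.I * (k.1 + 1) * (l.1 + 1) / m)

/-! ### Auxiliary lemmas -/

noncomputable def ee (N : ℕ) (r : ℤ) : ℂ :=
  Complex.exp ((2 * Real.pi * r / N : ℝ) * Complex.I)

lemma ee_abs (N : ℕ) (r : ℤ) : ‖ee N r‖ = 1 :=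
  Complex.norm_exp_ofReal_mul_I _

lemma ee_add (N : ℕ) (a b : ℤ) : ee N (a + b) = ee N a * ee N b := by
  rw [ee, ee, ee, ← Complex.exp_add]
  congr 1
  push_cast
  ring

lemma ee_pow (N : ℕ) (r : ℤ) (a : ℕ) : ee N r ^ a = ee N (r * a) := by
  rw [ee, ee, ← Complex.exp_nat_mul]
  congr 1
  push_cast
  ring

lemma ee_conj (N : ℕ) (r : ℤ) : (starRingEnd ℂ) (ee N r) = ee N (-r) := by
  rw [ee, ee, ← Complex.exp_conj]
  congr 1
  rw [map_mul, Complex.conj_I, Complex.conj_ofReal]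
  push_cast
  ring

lemma ee_dvd_one {N : ℕ} (hN : 0 < N) {r : ℤ} (h : (N:ℤ) ∣ r) : ee N r = 1 := by
  obtain ⟨q, rfl⟩ := h
  rw [ee]
  have hN' : (N:ℝ) ≠ 0 := Nat.cast_ne_zero.mpr hN.ne'
  have h1 : (2 * Real.pi * ((N:ℤ) * q : ℤ) / N : ℝ) = (q : ℝ) * (2 * Real.pi) := by
    push_cast
    field_simp
  rw [h1]
  have h2 : (((q : ℝ) * (2 * Real.pi) : ℝ) : ℂ) * Complex.I = (q:ℂ) * (2 * Real.pi * Complex.I) := by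
    push_cast; ring
  rw [h2, Complex.exp_int_mul_two_pi_mul_I]

lemma ee_ne_one {N : ℕ} (hN : 0 < N) {r : ℤ} (h : ¬ (N:ℤ) ∣ r) : ee N r ≠ 1 := by
  intro h1
  rw [ee, Complex.exp_eq_one_iff] at h1
  obtain ⟨k, hk⟩ := h1
  have hI : ((2 * Real.pi * r / N : ℝ) : ℂ) = ((k * (2 * Real.pi) : ℝ) : ℂ) := by
    have := hk.trans (by push_cast; ring :
      (k:ℂ) * (2 * (Real.pi:ℂ) * Complex.I) = ((k * (2 * Real.pi) : ℝ) : ℂ) * Complex.I)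
    exact mul_right_cancel₀ Complex.I_ne_zero this
  have hR : (2 * Real.pi * r / N : ℝ) = k * (2 * Real.pi) := Complex.ofReal_inj.mp hI
  have hN' : (N:ℝ) ≠ 0 := Nat.cast_ne_zero.mpr hN.ne'
  have hpi : (2 * Real.pi) ≠ 0 := by positivity
  have hr : (r : ℝ) = (k * N : ℤ) := by
    field_simp at hR
    push_cast
    have : (2 * Real.pi) * (r:ℝ) = (2 * Real.pi) * ((k:ℝ) * N) := by linear_combination (2 * Real.pi) * hR
    exact mul_left_cancel₀ hpi this
  have : r = k * N := by exact_mod_cast hr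
  exact h ⟨k, by rw [this]; ring⟩

lemma ee_sum {N : ℕ} (hN : 0 < N) (r : ℤ) :
    ∑ a ∈ Finset.Icc 1 N, ee N ((a:ℤ) * r) = if (N:ℤ) ∣ r then (N:ℂ) else 0 := by
  have hterm : ∀ a : ℕ, ee N ((a:ℤ) * r) = (ee N r) ^ a := by
    intro a; rw [ee_pow]; congr 1; ring
  split_ifs with h
  · have : ∀ a ∈ Finset.Icc 1 N, ee N ((a:ℤ) * r) = 1 := fun a _ =>
      ee_dvd_one hN (Dvd.dvd.mul_left h _)
    rw [Finset.sum_congr rfl this, Finset.sum_const, Nat.card_Icc]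
    simp
  · have hζ := ee_ne_one hN h
    have hζN : (ee N r) ^ N = 1 := by
      rw [ee_pow]; exact ee_dvd_one hN ⟨r, by ring⟩
    rw [← Finset.Ico_add_one_right_eq_Icc, Finset.sum_Ico_eq_sum_range]
    simp only [hterm]
    calc ∑ a ∈ Finset.range (N + 1 - 1), ee N r ^ (1 + a)
        = ee N r * ∑ a ∈ Finset.range N, ee N r ^ a := by
          rw [Finset.mul_sum, Nat.add_sub_cancel]
          exact Finset.sum_congr rfl fun a _ => by rw [pow_add, pow_one]
    _ = 0 := by rw [geom_sum_eq hζ, hζN]; simp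

lemma dft_eq {m : ℕ} (k t : Fin m) :
    dft m k t = ((1 / Real.sqrt m : ℝ) : ℂ) * ee m (-(((k.1 : ℤ) + 1) * ((t.1 : ℤ) + 1))) := by
  rw [dft, ee]
  congr 2
  push_cast
  ring

lemma dft_symm {m : ℕ} (k t : Fin m) : dft m k t = dft m t k := by
  rw [dft_eq, dft_eq]; ring_nf

lemma ee_shrink {n d : ℕ} (hn : 0 < n) (hd : 0 < d) (s : ℤ) :
    ee (n * d) ((d : ℤ) * s) = ee n s := by
  rw [ee, ee]
  congr 2
  rw [Complex.ofReal_inj]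
  have hd' : (d:ℝ) ≠ 0 := Nat.cast_ne_zero.mpr hd.ne'
  have hn' : (n:ℝ) ≠ 0 := Nat.cast_ne_zero.mpr hn.ne'
  push_cast
  field_simp

lemma ee_shrink' {m n d : ℕ} (hn : 0 < n) (hd : 0 < d) (hmd : m = n * d) (s : ℤ) :
    ee m ((d:ℤ) * s) = ee n s := by
  subst hmd; exact ee_shrink hn hd s

lemma sum_fin {m : ℕ} (hm : 0 < m) (r : ℤ) :
    ∑ j : Fin m, ee m (((j.1 : ℤ) + 1) * r) = if (m:ℤ) ∣ r then (m:ℂ) else 0 := by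
  rw [← ee_sum hm r]
  rw [Fin.sum_univ_eq_sum_range (fun j => ee m (((j : ℤ) + 1) * r))]
  rw [← Finset.Ico_add_one_right_eq_Icc, Finset.sum_Ico_eq_sum_range]
  rw [Nat.add_sub_cancel]
  exact Finset.sum_congr rfl fun a _ => by push_cast; ring_nf

lemma sum_P {m n : ℕ} (hm : 0 < m) (hn : 0 < n) (hnm : n ∣ m)
    (P : Finset (Fin m)) (hP : P = Finset.univ.filter (fun i : Fin m => (m / n) ∣ (i.1 + 1)))
    (f : ℕ → ℂ) :
    ∑ k ∈ P, f (k.1 + 1) = ∑ a ∈ Finset.Icc 1 n, f (a * (m / n)) := by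
  set d := m / n with hd
  have hmd : m = n * d := (Nat.mul_div_cancel' hnm).symm
  have hdpos : 0 < d := Nat.div_pos (Nat.le_of_dvd hm hnm) hn
  subst hP
  have key : ∀ a ∈ Finset.Icc 1 n, a * d - 1 < m := by
    intro a ha
    rw [Finset.mem_Icc] at ha
    have h1 : a * d ≤ n * d := Nat.mul_le_mul_right d ha.2
    have h2 : 1 * 1 ≤ a * d := Nat.mul_le_mul ha.1 hdpos
    omega
  refine Finset.sum_nbij' (i := fun k => (k.1 + 1) / d)
    (j := fun a => ⟨(a * d - 1) % m, Nat.mod_lt _ hm⟩) ?_ ?_ ?_ ?_ ?_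
  · intro k hk
    rw [Finset.mem_filter] at hk
    obtain ⟨c, hc⟩ := hk.2
    have hq : (k.1 + 1) / d = c := by rw [hc, Nat.mul_div_cancel_left _ hdpos]
    show (k.1 + 1) / d ∈ Finset.Icc 1 n
    rw [Finset.mem_Icc, hq]
    constructor
    · rcases Nat.eq_zero_or_pos c with h | h
      · subst h; simp at hc
      · exact h
    · have h1 : d * c ≤ d * n :=
        hc ▸ (le_of_le_of_eq (Nat.le_of_lt_succ (Nat.succ_le_succ k.2))
          (by rw [hmd, Nat.mul_comm]))
      exact Nat.le_of_mul_le_mul_left h1 hdpos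
  · intro a ha
    rw [Finset.mem_filter]
    refine ⟨Finset.mem_univ _, ?_⟩
    have h1 := key a ha
    rw [Finset.mem_Icc] at ha
    have h2 : 1 * 1 ≤ a * d := Nat.mul_le_mul ha.1 hdpos
    show d ∣ (a * d - 1) % m + 1
    rw [Nat.mod_eq_of_lt h1]
    have h3 : a * d - 1 + 1 = a * d := by omega
    rw [h3]
    exact ⟨a, by ring⟩
  · intro k hk
    rw [Finset.mem_filter] at hk
    obtain ⟨c, hc⟩ := hk.2
    have hq : (k.1 + 1) / d = c := by rw [hc, Nat.mul_div_cancel_left _ hdpos]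
    apply Fin.ext
    show ((k.1 + 1) / d * d - 1) % m = k.1
    rw [hq, mul_comm, ← hc]
    have h3 : k.1 + 1 - 1 = k.1 := by omega
    rw [h3, Nat.mod_eq_of_lt k.2]
  · intro a ha
    have h1 := key a ha
    rw [Finset.mem_Icc] at ha
    have h2 : 1 * 1 ≤ a * d := Nat.mul_le_mul ha.1 hdpos
    show (((a * d - 1) % m : ℕ) + 1) / d = a
    rw [Nat.mod_eq_of_lt h1]
    have h3 : a * d - 1 + 1 = a * d := by omega
    rw [h3, Nat.mul_div_cancel _ hdpos]
  · intro k hk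
    rw [Finset.mem_filter] at hk
    show f (k.1 + 1) = f ((k.1 + 1) / d * d)
    rw [Nat.div_mul_cancel hk.2]

lemma fin_eq_of_mdvd {m : ℕ} (hm : 0 < m) (t t' : Fin m)
    (h : (m:ℤ) ∣ ((t'.1 : ℤ) - t.1)) : t = t' := by
  have h1 : ((t'.1 : ℤ) - t.1) = 0 := by
    refine Int.eq_zero_of_abs_lt_dvd h ?_
    have := t.2
    have := t'.2
    rw [abs_lt]
    constructor <;> [skip; skip] <;> push_cast <;> omega
  apply Fin.ext
  omega

lemma Q_diff {m n : ℕ} (hm : 0 < m) (hn : 0 < n) (hnm : n ∣ m) (l : ℕ)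
    (Q : Finset (Fin m))
    (hQ : Q = Finset.univ.filter
      (fun i : Fin m => ∃ k ∈ Finset.Icc 1 n, (i.1 + 1) % m = (l + k) % m))
    (t t' : Fin m) (ht : t ∈ Q) (ht' : t' ∈ Q)
    (h : (n:ℤ) ∣ ((t'.1 : ℤ) - t.1)) : t = t' := by
  rw [hQ] at ht ht'
  simp only [Finset.mem_filter] at ht ht'
  obtain ⟨k, hk, e1⟩ := ht.2
  obtain ⟨k', hk', e2⟩ := ht'.2
  rw [Finset.mem_Icc] at hk hk'
  have d1 : (m:ℤ) ∣ ((l:ℤ) + k) - ((t.1:ℤ) + 1) := by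
    have h0 := (Nat.modEq_iff_dvd (n := m) (a := t.1 + 1) (b := l + k)).mp e1
    push_cast at h0
    convert h0 using 1
  have d2 : (m:ℤ) ∣ ((l:ℤ) + k') - ((t'.1:ℤ) + 1) := by
    have h0 := (Nat.modEq_iff_dvd (n := m) (a := t'.1 + 1) (b := l + k')).mp e2
    push_cast at h0
    convert h0 using 1
  have hnm' : (n:ℤ) ∣ (m:ℤ) := Int.natCast_dvd_natCast.mpr hnm
  have hdk : (n:ℤ) ∣ ((k':ℤ) - k) := by
    have h1 : (n:ℤ) ∣ (((l:ℤ)+k') - ((t'.1:ℤ)+1)) - (((l:ℤ)+k) - ((t.1:ℤ)+1)) :=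
      dvd_sub (dvd_trans hnm' d2) (dvd_trans hnm' d1)
    have h2 : ((k':ℤ) - k) =
        ((((l:ℤ)+k') - ((t'.1:ℤ)+1)) - (((l:ℤ)+k) - ((t.1:ℤ)+1))) + ((t'.1:ℤ) - t.1) := by
      ring
    rw [h2]
    exact dvd_add h1 h
  have hkk' : (k':ℤ) - k = 0 := by
    refine Int.eq_zero_of_abs_lt_dvd hdk ?_
    rw [abs_lt]
    constructor <;> push_cast <;> omega
  have hmdvd : (m:ℤ) ∣ ((t'.1:ℤ) - t.1) := by
    have h1 : (m:ℤ) ∣ (((l:ℤ)+k') - ((t'.1:ℤ)+1)) - (((l:ℤ)+k) - ((t.1:ℤ)+1)) := dvd_sub d2 d1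
    have h2 : ((t'.1:ℤ) - t.1) =
        -((((l:ℤ)+k') - ((t'.1:ℤ)+1)) - (((l:ℤ)+k) - ((t.1:ℤ)+1))) + ((k':ℤ) - k) := by ring
    rw [h2, hkk', add_zero]
    exact dvd_neg.mpr h1
  exact fin_eq_of_mdvd hm t t' hmdvd

lemma dft_mul_conj {m : ℕ} (k t t' : Fin m) :
    dft m k t * (starRingEnd ℂ) (dft m k t') =
    ((1 / m : ℝ) : ℂ) * ee m (((k.1 : ℤ) + 1) * ((t'.1 : ℤ) - t.1)) := by
  rw [dft_eq, dft_eq, map_mul, Complex.conj_ofReal, ee_conj]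
  have h1 : ((1 / Real.sqrt m : ℝ) : ℂ) * ((1 / Real.sqrt m : ℝ) : ℂ) = ((1 / m : ℝ) : ℂ) := by
    rw [← Complex.ofReal_mul, div_mul_div_comm, one_mul,
      Real.mul_self_sqrt (Nat.cast_nonneg m)]
  calc ((1 / Real.sqrt m : ℝ) : ℂ) * ee m (-(((k.1 : ℤ) + 1) * ((t.1 : ℤ) + 1))) *
        (((1 / Real.sqrt m : ℝ) : ℂ) * ee m (-(-(((k.1 : ℤ) + 1) * ((t'.1 : ℤ) + 1)))))
      = (((1 / Real.sqrt m : ℝ) : ℂ) * ((1 / Real.sqrt m : ℝ) : ℂ)) *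
        (ee m (-(((k.1 : ℤ) + 1) * ((t.1 : ℤ) + 1))) *
         ee m (-(-(((k.1 : ℤ) + 1) * ((t'.1 : ℤ) + 1))))) := by ring
    _ = ((1 / m : ℝ) : ℂ) * ee m (((k.1 : ℤ) + 1) * ((t'.1 : ℤ) - t.1)) := by
        rw [h1, ← ee_add]
        congr 2
        ring

lemma col_orth {m : ℕ} (hm : 0 < m) (t t' : Fin m) :
    ∑ j, dft m j t * (starRingEnd ℂ) (dft m j t') = if t = t' then 1 else 0 := by
  have h1 : ∀ j : Fin m, dft m j t * (starRingEnd ℂ) (dft m j t') =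
      ((1 / m : ℝ) : ℂ) * ee m (((j.1 : ℤ) + 1) * ((t'.1 : ℤ) - t.1)) := fun j =>
    dft_mul_conj j t t'
  rw [Finset.sum_congr rfl (fun j _ => h1 j), ← Finset.mul_sum, sum_fin hm]
  have hm' : (m : ℂ) ≠ 0 := Nat.cast_ne_zero.mpr hm.ne'
  by_cases h : t = t'
  · subst h
    simp [hm']
  · have : ¬ (m:ℤ) ∣ ((t'.1 : ℤ) - t.1) := by
      intro hd
      exact h (fin_eq_of_mdvd hm t t' hd)
    simp [h, this]

lemma quad {N : ℕ} (C : Matrix (Fin N) (Fin N) ℂ) (w : Fin N → ℝ)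
    (h : ∀ t t', ∑ k, C k t * (starRingEnd ℂ) (C k t') = if t = t' then ((w t : ℝ) : ℂ) else 0)
    (y : Fin N → ℂ) :
    ∑ k, ‖C.mulVec y k‖ ^ 2 = ∑ t, w t * ‖y t‖ ^ 2 := by
  have main : ∑ k, (C.mulVec y k) * (starRingEnd ℂ) (C.mulVec y k) =
      ∑ t, ((w t : ℝ) : ℂ) * (y t * (starRingEnd ℂ) (y t)) := by
    simp only [Matrix.mulVec, dotProduct]
    calc ∑ k, (∑ t, C k t * y t) * (starRingEnd ℂ) (∑ t', C k t' * y t')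
        = ∑ k, ∑ t, ∑ t', (C k t * (starRingEnd ℂ) (C k t')) *
            (y t * (starRingEnd ℂ) (y t')) := by
          refine Finset.sum_congr rfl fun k _ => ?_
          rw [map_sum, Finset.sum_mul_sum]
          refine Finset.sum_congr rfl fun t _ => ?_
          refine Finset.sum_congr rfl fun t' _ => ?_
          rw [map_mul]
          ring
      _ = ∑ t, ∑ t', (∑ k, C k t * (starRingEnd ℂ) (C k t')) *
            (y t * (starRingEnd ℂ) (y t')) := by
          rw [Finset.sum_comm]
          refine Finset.sum_congr rfl fun t _ => ?_
          rw [Finset.sum_comm]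
          refine Finset.sum_congr rfl fun t' _ => ?_
          rw [Finset.sum_mul]
      _ = ∑ t, ((w t : ℝ) : ℂ) * (y t * (starRingEnd ℂ) (y t)) := by
          refine Finset.sum_congr rfl fun t _ => ?_
          simp only [h, ite_mul, zero_mul]
          rw [Finset.sum_ite_eq]
          simp
  have lhs : ∑ k, (C.mulVec y k) * (starRingEnd ℂ) (C.mulVec y k) =
      ((∑ k, ‖C.mulVec y k‖ ^ 2 : ℝ) : ℂ) := by
    push_cast
    refine Finset.sum_congr rfl fun k _ => ?_
    rw [Complex.mul_conj, Complex.normSq_eq_norm_sq]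
    push_cast
    ring
  have rhs : ∑ t, ((w t : ℝ) : ℂ) * (y t * (starRingEnd ℂ) (y t)) =
      ((∑ t, w t * ‖y t‖ ^ 2 : ℝ) : ℂ) := by
    push_cast
    refine Finset.sum_congr rfl fun t _ => ?_
    rw [Complex.mul_conj, Complex.normSq_eq_norm_sq]
    push_cast
    ring
  have := lhs.symm.trans (main.trans rhs)
  exact_mod_cast this

lemma gram {m n : ℕ} (hm : 0 < m) (hn : 0 < n) (hnm : n ∣ m) (l : ℕ)
    (P : Finset (Fin m)) (hP : P = Finset.univ.filter (fun i : Fin m => (m / n) ∣ (i.1 + 1)))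
    (Q : Finset (Fin m))
    (hQ : Q = Finset.univ.filter
      (fun i : Fin m => ∃ k ∈ Finset.Icc 1 n, (i.1 + 1) % m = (l + k) % m))
    (t t' : Fin m) :
    ∑ k, (Dmat P * dft m * Dmat Q) k t * (starRingEnd ℂ) ((Dmat P * dft m * Dmat Q) k t') =
    if t = t' then (((if t ∈ Q then (n:ℝ)/m else 0) : ℝ) : ℂ) else 0 := by
  have hmd : m = n * (m / n) := (Nat.mul_div_cancel' hnm).symm
  have hdpos : 0 < m / n := Nat.div_pos (Nat.le_of_dvd hm hnm) hn
  have entry : ∀ (k s : Fin m), (Dmat P * dft m * Dmat Q) k s =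
      (if k ∈ P then 1 else 0) * dft m k s * (if s ∈ Q then 1 else 0) := by
    intro k s
    rw [Dmat, Dmat, Matrix.mul_diagonal, Matrix.diagonal_mul]
  set r : ℤ := (t'.1 : ℤ) - t.1 with hr
  have hterm : ∀ k : Fin m,
      (Dmat P * dft m * Dmat Q) k t * (starRingEnd ℂ) ((Dmat P * dft m * Dmat Q) k t') =
      (if t ∈ Q then 1 else 0) * (if t' ∈ Q then 1 else 0) *
      (if k ∈ P then (dft m k t * (starRingEnd ℂ) (dft m k t')) else 0) := by
    intro k
    rw [entry, entry, map_mul, map_mul]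
    simp only [apply_ite (starRingEnd ℂ), map_one, map_zero]
    split_ifs <;> ring
  rw [Finset.sum_congr rfl (fun k _ => hterm k), ← Finset.mul_sum]
  have hsum : (∑ k : Fin m, (if k ∈ P then (dft m k t * (starRingEnd ℂ) (dft m k t')) else 0))
      = ((1/m:ℝ):ℂ) * (if (n:ℤ) ∣ r then (n:ℂ) else 0) := by
    rw [Finset.sum_ite_mem, Finset.univ_inter]
    have h2 : ∀ k ∈ P, dft m k t * (starRingEnd ℂ) (dft m k t') =
        (fun a : ℕ => ((1/m:ℝ):ℂ) * ee m ((a:ℤ) * r)) (k.1+1) := by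
      intro k _
      simp only [Nat.cast_add, Nat.cast_one]
      exact dft_mul_conj k t t'
    rw [Finset.sum_congr rfl h2,
      sum_P hm hn hnm P hP (fun a : ℕ => ((1/m:ℝ):ℂ) * ee m ((a:ℤ) * r))]
    have h3 : ∀ a ∈ Finset.Icc 1 n,
        (fun a : ℕ => ((1/m:ℝ):ℂ) * ee m ((a:ℤ) * r)) (a * (m/n)) =
        ((1/m:ℝ):ℂ) * ee n ((a:ℤ) * r) := by
      intro a _
      simp only
      have h4 : ((↑(a*(m/n)):ℤ)) * r = ((m/n : ℕ):ℤ) * ((a:ℤ) * r) := by push_cast; ring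
      rw [h4, ee_shrink' hn hdpos hmd]
    rw [Finset.sum_congr rfl h3, ← Finset.mul_sum, ee_sum hn r]
  rw [hsum]
  by_cases htt : t = t'
  · subst htt
    have hdr : (n:ℤ) ∣ r := by rw [hr]; simp
    rw [if_pos hdr, if_pos rfl]
    by_cases hQt : t ∈ Q
    · rw [if_pos hQt, if_pos hQt]
      have hm' : (m:ℂ) ≠ 0 := Nat.cast_ne_zero.mpr hm.ne'
      push_cast
      field_simp
    · rw [if_neg hQt, if_neg hQt]
      simp
  · rw [if_neg htt]
    by_cases hQt : t ∈ Q
    · by_cases hQt' : t' ∈ Q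
      · have hnd : ¬ (n:ℤ) ∣ r := fun hd => htt (Q_diff hm hn hnm l Q hQ t t' hQt hQt' hd)
        rw [if_neg hnd]
        ring
      · rw [if_neg hQt']
        ring
    · rw [if_neg hQt]
      ring

set_option maxHeartbeats 2000000 in
theorem stmt5 {m n : ℕ} (hm : 0 < m) (hn : 0 < n) (hnm : n ∣ m) (l : ℕ)
    (P : Finset (Fin m)) (hP : P = Finset.univ.filter (fun i : Fin m => (m / n) ∣ (i.1 + 1)))
    (Q : Finset (Fin m))
    (hQ : Q = Finset.univ.filter
      (fun i : Fin m => ∃ k ∈ Finset.Icc 1 n, (i.1 + 1) % m = (l + k) % m)) :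
    opnorm2 (Dmat P * (dft m * Dmat Q * (dft m)ᴴ)) = Real.sqrt ((n : ℝ) / m) := by
  unfold opnorm2
  have hm' : (m:ℝ) ≠ 0 := Nat.cast_ne_zero.mpr hm.ne'
  set A := Dmat P * (dft m * Dmat Q * (dft m)ᴴ) with hA
  set B := Dmat P * dft m * Dmat Q with hB
  have hassoc : A = B * (dft m)ᴴ := by rw [hA, hB]; simp only [Matrix.mul_assoc]
  set w : Fin m → ℝ := fun t => if t ∈ Q then (n:ℝ)/m else 0 with hw
  have gramB : ∀ t t' : Fin m, ∑ k, B k t * (starRingEnd ℂ) (B k t') =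
      if t = t' then ((w t : ℝ) : ℂ) else 0 := by
    intro t t'
    exact gram hm hn hnm l P hP Q hQ t t'
  have gramFH : ∀ t t' : Fin m, ∑ k, (dft m)ᴴ k t * (starRingEnd ℂ) ((dft m)ᴴ k t') =
      if t = t' then (((1:ℝ)) : ℂ) else 0 := by
    intro t t'
    have h1 : ∀ k : Fin m, (dft m)ᴴ k t * (starRingEnd ℂ) ((dft m)ᴴ k t') =
        (starRingEnd ℂ) (dft m k t * (starRingEnd ℂ) (dft m k t')) := by
      intro k
      simp only [Matrix.conjTranspose_apply, Complex.star_def, map_mul, Complex.conj_conj]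
      rw [dft_symm t k, dft_symm t' k]
    rw [Finset.sum_congr rfl (fun k _ => h1 k), ← map_sum, col_orth hm]
    split_ifs <;> simp
  have hquadB := quad B w gramB
  have hquadF := quad (dft m)ᴴ (fun _ => (1:ℝ)) gramFH
  have hAx : ∀ x : Fin m → ℂ, A.mulVec x = B.mulVec ((dft m)ᴴ.mulVec x) := by
    intro x
    rw [hassoc]
    exact (Matrix.mulVec_mulVec x B (dft m)ᴴ).symm
  have hwle : ∀ t, w t ≤ (n:ℝ)/m := by
    intro t
    rw [hw]
    simp only
    split_ifs
    · exact le_refl _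
    · positivity
  have hsq : ∀ x : Fin m → ℂ, vnorm2 x = 1 → ∑ i, ‖x i‖ ^ 2 = 1 := by
    intro x hx
    have h0 : 0 ≤ ∑ i, ‖x i‖ ^ 2 := by positivity
    rw [vnorm2] at hx
    nlinarith [Real.sq_sqrt h0]
  have hub : ∀ c ∈ {c | ∃ x : Fin m → ℂ, vnorm2 x = 1 ∧ c = vnorm2 (A.mulVec x)},
      c ≤ Real.sqrt ((n:ℝ)/m) := by
    rintro c ⟨x, hx1, rfl⟩
    rw [hAx, vnorm2]
    apply Real.sqrt_le_sqrt
    rw [hquadB]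
    have hy := hquadF x
    calc ∑ t, w t * ‖(dft m)ᴴ.mulVec x t‖ ^ 2
        ≤ ∑ t, ((n:ℝ)/m) * ‖(dft m)ᴴ.mulVec x t‖ ^ 2 := by
          apply Finset.sum_le_sum
          intro t _
          exact mul_le_mul_of_nonneg_right (hwle t) (by positivity)
      _ = ((n:ℝ)/m) * ∑ t, ‖(dft m)ᴴ.mulVec x t‖ ^ 2 := by rw [Finset.mul_sum]
      _ = ((n:ℝ)/m) := by
          rw [hy]
          simp only [one_mul]
          rw [hsq x hx1, mul_one]
  set t₀ : Fin m := ⟨l % m, Nat.mod_lt l hm⟩ with ht₀def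
  have ht0 : t₀ ∈ Q := by
    rw [hQ]
    simp only [Finset.mem_filter]
    refine ⟨Finset.mem_univ _, 1, ?_, ?_⟩
    · rw [Finset.mem_Icc]; omega
    · show (l % m + 1) % m = (l + 1) % m
      exact Nat.mod_add_mod l m 1
  set x₀ : Fin m → ℂ := fun j => dft m j t₀ with hx₀def
  have habs : ∀ j t : Fin m, ‖dft m j t‖ ^ 2 = 1/m := by
    intro j t
    rw [dft_eq, norm_mul, ee_abs, mul_one, Complex.norm_real, Real.norm_eq_abs,
      abs_of_nonneg (by positivity : (0:ℝ) ≤ 1 / Real.sqrt m)]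
    rw [div_pow, one_pow, Real.sq_sqrt (Nat.cast_nonneg m)]
  have hx₀ : vnorm2 x₀ = 1 := by
    rw [vnorm2]
    have h5 : ∑ i, ‖x₀ i‖ ^ 2 = 1 := by
      simp only [hx₀def]
      rw [Finset.sum_congr rfl (fun j _ => habs j t₀)]
      rw [Finset.sum_const, Finset.card_univ, Fintype.card_fin]
      rw [nsmul_eq_mul]; field_simp
    rw [h5, Real.sqrt_one]
  have hy₀ : (dft m)ᴴ.mulVec x₀ = fun t => if t = t₀ then 1 else 0 := by
    funext t
    show ∑ j, (dft m)ᴴ t j * x₀ j = _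
    have h1 : ∀ j : Fin m, (dft m)ᴴ t j * x₀ j =
        (starRingEnd ℂ) (dft m j t * (starRingEnd ℂ) (dft m j t₀)) := by
      intro j
      simp only [Matrix.conjTranspose_apply, Complex.star_def, hx₀def, map_mul,
        Complex.conj_conj]
    rw [Finset.sum_congr rfl (fun j _ => h1 j), ← map_sum, col_orth hm]
    split_ifs <;> simp
  have hAx₀ : vnorm2 (A.mulVec x₀) = Real.sqrt ((n:ℝ)/m) := by
    rw [hAx, vnorm2, hquadB, hy₀]
    congr 1
    have h6 : ∀ t : Fin m, w t * ‖if t = t₀ then (1:ℂ) else 0‖ ^ 2 =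
        if t = t₀ then w t else 0 := by
      intro t
      split_ifs <;> simp
    rw [Finset.sum_congr rfl (fun t _ => h6 t), Finset.sum_ite_eq']
    simp only [Finset.mem_univ, if_true, hw]
    rw [if_pos ht0]
  apply le_antisymm
  · exact Real.sSup_le hub (Real.sqrt_nonneg _)
  · exact le_csSup ⟨_, hub⟩ ⟨x₀, hx₀, hAx₀.symm⟩
end

section
/- Let U ∈ ℂ^{m×m} be unitary, P, Q ⊆ {1,…,m}, and ε_P, ε_Q ∈ [0,1]. Suppose there exist nonzero p, q ∈ ℂ^m with p = U q, ‖p − D_P p‖₂ ≤ ε_P ‖p‖₂, and ‖q − D_Q q‖₂ ≤ ε_Q ‖q‖₂. Then ‖D_P U D_Q U*‖_{2→2} ≥ max(1 − ε_P − ε_Q, 0). -/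
open scoped BigOperators Matrix

lemma vnorm2_eq_norm {m : ℕ} (x : Fin m → ℂ) :
    vnorm2 x = ‖(WithLp.equiv 2 (Fin m → ℂ)).symm x‖ := by
  rw [EuclideanSpace.norm_eq]
  simp [vnorm2]

lemma vnorm2_nonneg {m : ℕ} (x : Fin m → ℂ) : 0 ≤ vnorm2 x := Real.sqrt_nonneg _

lemma vnorm2_pos {m : ℕ} {x : Fin m → ℂ} (hx : x ≠ 0) : 0 < vnorm2 x := by
  rw [vnorm2_eq_norm, norm_pos_iff]
  simpa using hx

lemma vnorm2_triangle {m : ℕ} (x y : Fin m → ℂ) :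
    vnorm2 (x + y) ≤ vnorm2 x + vnorm2 y := by
  simp only [vnorm2_eq_norm, map_add]
  exact norm_add_le _ _

lemma vnorm2_smul {m : ℕ} (c : ℂ) (x : Fin m → ℂ) :
    vnorm2 (c • x) = ‖c‖ * vnorm2 x := by
  unfold vnorm2
  have : ∀ i, ‖(c • x) i‖ ^ 2 = ‖c‖ ^ 2 * ‖x i‖ ^ 2 := by
    intro i; simp [mul_pow]
  simp only [this, ← Finset.mul_sum]
  rw [Real.sqrt_mul (by positivity), Real.sqrt_sq (norm_nonneg c)]

lemma vnorm2_unitary {m : ℕ} {U : Matrix (Fin m) (Fin m) ℂ}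
    (hU : U ∈ Matrix.unitaryGroup (Fin m) ℂ) (x : Fin m → ℂ) :
    vnorm2 (U.mulVec x) = vnorm2 x := by
  unfold vnorm2
  congr 1
  have key : (star (U.mulVec x)) ⬝ᵥ (U.mulVec x) = star x ⬝ᵥ x := by
    rw [Matrix.star_mulVec, Matrix.dotProduct_mulVec, Matrix.vecMul_vecMul,
      ← Matrix.star_eq_conjTranspose, hU.1]
    simp [Matrix.vecMul_one]
  have h1 : ∀ y : Fin m → ℂ, ((∑ i, ‖y i‖ ^ 2 : ℝ) : ℂ) = star y ⬝ᵥ y := by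
    intro y
    rw [dotProduct]
    push_cast
    congr 1
    ext i
    rw [Pi.star_apply, Complex.star_def, mul_comm, Complex.mul_conj]
    norm_cast
    exact (Complex.normSq_eq_norm_sq _).symm
  have := (h1 (U.mulVec x)).trans (key.trans (h1 x).symm)
  exact_mod_cast this

lemma vnorm2_dmat_le {m : ℕ} (P : Finset (Fin m)) (x : Fin m → ℂ) :
    vnorm2 ((Dmat P).mulVec x) ≤ vnorm2 x := by
  unfold vnorm2
  apply Real.sqrt_le_sqrt
  apply Finset.sum_le_sum
  intro i _
  rw [Dmat, Matrix.mulVec_diagonal]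
  gcongr
  by_cases h : i ∈ P <;> simp [h, norm_nonneg]

theorem stmt7 {m : ℕ} (U : Matrix (Fin m) (Fin m) ℂ)
    (hU : U ∈ Matrix.unitaryGroup (Fin m) ℂ) (P Q : Finset (Fin m))
    (εP εQ : ℝ) (hεP : εP ∈ Set.Icc (0 : ℝ) 1) (hεQ : εQ ∈ Set.Icc (0 : ℝ) 1)
    (p q : Fin m → ℂ) (hp0 : p ≠ 0) (hq0 : q ≠ 0) (hpq : p = U.mulVec q)
    (hpc : vnorm2 (p - (Dmat P).mulVec p) ≤ εP * vnorm2 p)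
    (hqc : vnorm2 (q - (Dmat Q).mulVec q) ≤ εQ * vnorm2 q) :
    opnorm2 (Dmat P * (U * Dmat Q * Uᴴ)) ≥ max (1 - εP - εQ) 0 := by
  set A := Dmat P * (U * Dmat Q * Uᴴ) with hA
  set S := {c | ∃ x : Fin m → ℂ, vnorm2 x = 1 ∧ c = vnorm2 (A.mulVec x)} with hS
  -- boundedness
  have hbdd : BddAbove S := by
    refine ⟨‖LinearMap.toContinuousLinearMap (Matrix.toEuclideanLin A)‖, ?_⟩
    rintro c ⟨x, hx1, rfl⟩
    have : vnorm2 (A.mulVec x)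
        = ‖LinearMap.toContinuousLinearMap (Matrix.toEuclideanLin A)
            ((WithLp.equiv 2 (Fin m → ℂ)).symm x)‖ := by
      rw [vnorm2_eq_norm]
      congr 1
    rw [this]
    calc ‖LinearMap.toContinuousLinearMap (Matrix.toEuclideanLin A)
            ((WithLp.equiv 2 (Fin m → ℂ)).symm x)‖
        ≤ ‖LinearMap.toContinuousLinearMap (Matrix.toEuclideanLin A)‖
            * ‖(WithLp.equiv 2 (Fin m → ℂ)).symm x‖ := ContinuousLinearMap.le_opNorm _ _
      _ = ‖LinearMap.toContinuousLinearMap (Matrix.toEuclideanLin A)‖ := by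
            rw [← vnorm2_eq_norm, hx1, mul_one]
  have hSnn : ∀ c ∈ S, (0:ℝ) ≤ c := by
    rintro c ⟨x, hx1, rfl⟩; exact vnorm2_nonneg _
  rcases le_or_gt (1 - εP - εQ) 0 with hle | hlt
  · rw [max_eq_right hle]
    exact Real.sSup_nonneg hSnn
  rw [max_eq_left hlt.le]
  -- main estimate
  have np : 0 < vnorm2 p := vnorm2_pos hp0
  have hqp : vnorm2 q = vnorm2 p := by rw [hpq, vnorm2_unitary hU]
  have hAp : A.mulVec p = (Dmat P).mulVec (U.mulVec ((Dmat Q).mulVec q)) := by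
    have hUq : Uᴴ.mulVec p = q := by
      rw [hpq, Matrix.mulVec_mulVec, ← Matrix.star_eq_conjTranspose, hU.1, Matrix.one_mulVec]
    rw [hA]
    rw [← Matrix.mulVec_mulVec, ← Matrix.mulVec_mulVec, ← Matrix.mulVec_mulVec, hUq]
  have hdecomp : p - A.mulVec p
      = (p - (Dmat P).mulVec p) + (Dmat P).mulVec (U.mulVec (q - (Dmat Q).mulVec q)) := by
    rw [Matrix.mulVec_sub, Matrix.mulVec_sub, hAp, ← hpq]
    abel
  have hub : vnorm2 (p - A.mulVec p) ≤ (εP + εQ) * vnorm2 p := by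
    calc vnorm2 (p - A.mulVec p)
        ≤ vnorm2 (p - (Dmat P).mulVec p)
          + vnorm2 ((Dmat P).mulVec (U.mulVec (q - (Dmat Q).mulVec q))) := by
          rw [hdecomp]; exact vnorm2_triangle _ _
      _ ≤ εP * vnorm2 p + vnorm2 (q - (Dmat Q).mulVec q) := by
          gcongr
          calc vnorm2 ((Dmat P).mulVec (U.mulVec (q - (Dmat Q).mulVec q)))
              ≤ vnorm2 (U.mulVec (q - (Dmat Q).mulVec q)) := vnorm2_dmat_le _ _
            _ = vnorm2 (q - (Dmat Q).mulVec q) := vnorm2_unitary hU _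
      _ ≤ εP * vnorm2 p + εQ * vnorm2 q := by gcongr
      _ = (εP + εQ) * vnorm2 p := by rw [hqp]; ring
  have hlb : (1 - εP - εQ) * vnorm2 p ≤ vnorm2 (A.mulVec p) := by
    have h1 : vnorm2 p ≤ vnorm2 (p - A.mulVec p) + vnorm2 (A.mulVec p) := by
      have := vnorm2_triangle (p - A.mulVec p) (A.mulVec p)
      simpa using this
    nlinarith [vnorm2_nonneg (A.mulVec p)]
  -- normalized vector
  set c : ℂ := ((vnorm2 p : ℝ) : ℂ)⁻¹ with hc
  have habsc : ‖c‖ = (vnorm2 p)⁻¹ := by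
    rw [hc, norm_inv, Complex.norm_real, Real.norm_of_nonneg np.le]
  have hmem : (vnorm2 p)⁻¹ * vnorm2 (A.mulVec p) ∈ S := by
    refine ⟨c • p, ?_, ?_⟩
    · rw [vnorm2_smul, habsc, inv_mul_cancel₀ np.ne']
    · rw [Matrix.mulVec_smul, vnorm2_smul, habsc]
  have := le_csSup hbdd hmem
  refine le_trans ?_ this
  have key : 1 - εP - εQ = (vnorm2 p)⁻¹ * ((1 - εP - εQ) * vnorm2 p) := by
    field_simp
  rw [key]
  exact mul_le_mul_of_nonneg_left hlb (by positivity)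
end

section
/- Let A, B ∈ ℂ^{m×m} be unitary and suppose A p = B q for nonzero vectors p, q ∈ ℂ^m. Then ‖p‖₀ · ‖q‖₀ ≥ 1/μ², where ‖·‖₀ counts nonzero entries and μ = max_{i,j} |a_i* b_j| is the mutual coherence of the columns of A and B. -/
open scoped BigOperators Matrix

noncomputable def norm0 {m : ℕ} (x : Fin m → ℂ) : ℕ :=
  (Finset.univ.filter (fun i => x i ≠ 0)).card

lemma sq_sum_abs_le {m : ℕ} (x : Fin m → ℂ) :
    (∑ i, ‖x i‖) ^ 2 ≤ (norm0 x : ℝ) * ∑ i, ‖x i‖ ^ 2 := by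
  classical
  set s := Finset.univ.filter (fun i => x i ≠ 0) with hs
  have h1 : (∑ i, ‖x i‖) = ∑ i ∈ s, ‖x i‖ := by
    rw [Finset.sum_filter]
    apply Finset.sum_congr rfl
    intro i _
    by_cases h : x i = 0 <;> simp [h]
  rw [h1]
  calc (∑ i ∈ s, ‖x i‖) ^ 2 ≤ (s.card : ℝ) * ∑ i ∈ s, ‖x i‖ ^ 2 :=
        sq_sum_le_card_mul_sum_sq
    _ ≤ (norm0 x : ℝ) * ∑ i, ‖x i‖ ^ 2 := by
        apply mul_le_mul_of_nonneg_left _ (Nat.cast_nonneg _)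
        exact Finset.sum_le_sum_of_subset_of_nonneg (Finset.subset_univ s)
          (fun i _ _ => by positivity)

theorem stmt9 {m : ℕ} (A B : Matrix (Fin m) (Fin m) ℂ)
    (hA : A ∈ Matrix.unitaryGroup (Fin m) ℂ) (hB : B ∈ Matrix.unitaryGroup (Fin m) ℂ)
    (μ : ℝ) (hμ : IsGreatest {x | ∃ i j, x = ‖(Aᴴ * B) i j‖} μ)
    (p q : Fin m → ℂ) (hp0 : p ≠ 0) (hq0 : q ≠ 0) (hpq : A.mulVec p = B.mulVec q) :
    ((norm0 p : ℝ) * norm0 q) ≥ 1 / μ ^ 2 := by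
  classical
  set M := Aᴴ * B with hM
  have hAs : star A * A = 1 := hA.1
  have hBs : star B * B = 1 := hB.1
  have hpMq : p = M.mulVec q := by
    calc p = (1 : Matrix (Fin m) (Fin m) ℂ).mulVec p := by simp
      _ = (star A * A).mulVec p := by rw [hAs]
      _ = (star A).mulVec (A.mulVec p) := by rw [Matrix.mulVec_mulVec]
      _ = (star A).mulVec (B.mulVec q) := by rw [hpq]
      _ = M.mulVec q := by rw [Matrix.mulVec_mulVec, hM, Matrix.star_eq_conjTranspose]
  have hqMp : q = (Mᴴ).mulVec p := by
    have : Mᴴ = Bᴴ * A := by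
      rw [hM, Matrix.conjTranspose_mul, Matrix.conjTranspose_conjTranspose]
    rw [this]
    calc q = (1 : Matrix (Fin m) (Fin m) ℂ).mulVec q := by simp
      _ = (star B * B).mulVec q := by rw [hBs]
      _ = (star B).mulVec (B.mulVec q) := by rw [Matrix.mulVec_mulVec]
      _ = (star B).mulVec (A.mulVec p) := by rw [hpq]
      _ = (Bᴴ * A).mulVec p := by rw [Matrix.mulVec_mulVec, Matrix.star_eq_conjTranspose]
  have hMle : ∀ i j, ‖M i j‖ ≤ μ := fun i j => hμ.2 ⟨i, j, rfl⟩
  -- μ > 0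
  have hμ0 : 0 < μ := by
    obtain ⟨i, j, hij⟩ := hμ.1
    rcases lt_or_eq_of_le (hij ▸ norm_nonneg (M i j) : (0:ℝ) ≤ μ) with h | h
    · exact h
    · exfalso
      apply hp0
      have hMzero : ∀ i j, M i j = 0 := by
        intro i j
        have := hMle i j
        rw [← h] at this
        exact norm_eq_zero.mp (le_antisymm this (norm_nonneg _))
      funext i
      rw [hpMq]
      simp [Matrix.mulVec, dotProduct, hMzero]
  set S1p := ∑ i, ‖p i‖ with hS1p
  set S1q := ∑ i, ‖q i‖ with hS1q
  set S2p := ∑ i, ‖p i‖ ^ 2 with hS2p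
  set S2q := ∑ i, ‖q i‖ ^ 2 with hS2q
  have habsp : ∀ i, ‖p i‖ ≤ μ * S1q := by
    intro i
    have : p i = ∑ j, M i j * q j := by rw [hpMq]; rfl
    rw [this]
    calc ‖∑ j, M i j * q j‖ ≤ ∑ j, ‖M i j * q j‖ :=
          norm_sum_le _ _
      _ ≤ ∑ j, μ * ‖q j‖ := by
          apply Finset.sum_le_sum
          intro j _
          rw [norm_mul]
          exact mul_le_mul_of_nonneg_right (hMle i j) (norm_nonneg _)
      _ = μ * S1q := by rw [← Finset.mul_sum]
  have habsq : ∀ j, ‖q j‖ ≤ μ * S1p := by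
    intro j
    have : q j = ∑ i, Mᴴ j i * p i := by rw [hqMp]; rfl
    rw [this]
    calc ‖∑ i, Mᴴ j i * p i‖ ≤ ∑ i, ‖Mᴴ j i * p i‖ :=
          norm_sum_le _ _
      _ ≤ ∑ i, μ * ‖p i‖ := by
          apply Finset.sum_le_sum
          intro i _
          rw [norm_mul]
          have : ‖Mᴴ j i‖ = ‖M i j‖ := by
            simp [Matrix.conjTranspose_apply]
          rw [this]
          exact mul_le_mul_of_nonneg_right (hMle i j) (norm_nonneg _)
      _ = μ * S1p := by rw [← Finset.mul_sum]
  have hS1q_nonneg : 0 ≤ S1q := Finset.sum_nonneg fun i _ => norm_nonneg _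
  have hS1p_nonneg : 0 ≤ S1p := Finset.sum_nonneg fun i _ => norm_nonneg _
  have h2p : S2p ≤ S1p * (μ * S1q) := by
    rw [hS2p, Finset.sum_mul]
    apply Finset.sum_le_sum
    intro i _
    rw [sq]
    exact mul_le_mul_of_nonneg_left (habsp i) (norm_nonneg _)
  have h2q : S2q ≤ S1q * (μ * S1p) := by
    rw [hS2q, Finset.sum_mul]
    apply Finset.sum_le_sum
    intro j _
    rw [sq]
    exact mul_le_mul_of_nonneg_left (habsq j) (norm_nonneg _)
  have hS2p_pos : 0 < S2p := by
    obtain ⟨i, hi⟩ : ∃ i, p i ≠ 0 := by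
      by_contra h
      push_neg at h
      exact hp0 (funext h)
    apply Finset.sum_pos'
    · intro i _; positivity
    · exact ⟨i, Finset.mem_univ i, pow_pos (norm_pos_iff.mpr hi) 2⟩
  have hS2q_pos : 0 < S2q := by
    obtain ⟨j, hj⟩ : ∃ j, q j ≠ 0 := by
      by_contra h
      push_neg at h
      exact hq0 (funext h)
    apply Finset.sum_pos'
    · intro j _; positivity
    · exact ⟨j, Finset.mem_univ j, pow_pos (norm_pos_iff.mpr hj) 2⟩
  have hcsP : S1p ^ 2 ≤ (norm0 p : ℝ) * S2p := sq_sum_abs_le p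
  have hcsQ : S1q ^ 2 ≤ (norm0 q : ℝ) * S2q := sq_sum_abs_le q
  have key : S2p * S2q ≤ μ ^ 2 * ((norm0 p : ℝ) * (norm0 q : ℝ)) * (S2p * S2q) := by
    calc S2p * S2q ≤ (S1p * (μ * S1q)) * (S1q * (μ * S1p)) :=
          mul_le_mul h2p h2q hS2q_pos.le (by positivity)
      _ = μ ^ 2 * (S1p ^ 2 * S1q ^ 2) := by ring
      _ ≤ μ ^ 2 * (((norm0 p : ℝ) * S2p) * ((norm0 q : ℝ) * S2q)) := by
          apply mul_le_mul_of_nonneg_left _ (by positivity)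
          exact mul_le_mul hcsP hcsQ (by positivity) (by positivity)
      _ = μ ^ 2 * ((norm0 p : ℝ) * (norm0 q : ℝ)) * (S2p * S2q) := by ring
  have h1 : 1 ≤ μ ^ 2 * ((norm0 p : ℝ) * (norm0 q : ℝ)) := by
    have hpos : 0 < S2p * S2q := mul_pos hS2p_pos hS2q_pos
    nlinarith
  rw [ge_iff_le, div_le_iff₀ (by positivity : (0:ℝ) < μ ^ 2)]
  nlinarith
end

section
/- Let U ∈ ℂ^{m×m} be unitary and P, Q ⊆ {1,…,m}. Then ‖D_P U D_Q U*‖_{1→1} ≤ |P|·|Q|·μ², where μ = max_{k,l}|U_{k,l}|. -/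
open scoped BigOperators Matrix

lemma entry_bound {m : ℕ} (U : Matrix (Fin m) (Fin m) ℂ) (P Q : Finset (Fin m)) (μ : ℝ)
    (hμ0 : 0 ≤ μ) (hub : ∀ k l, ‖U k l‖ ≤ μ) (i j : Fin m) :
    ‖(Dmat P * (U * Dmat Q * Uᴴ)) i j‖
      ≤ (if i ∈ P then (1:ℝ) else 0) * ((Q.card : ℝ) * μ ^ 2) := by
  have hAij : (Dmat P * (U * Dmat Q * Uᴴ)) i j
      = (if i ∈ P then (1:ℂ) else 0) * ∑ k, (U i k * (if k ∈ Q then 1 else 0)) * (starRingEnd ℂ) (U j k) := by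
    simp [Dmat, Matrix.mul_apply, Matrix.diagonal_apply, Matrix.conjTranspose_apply, ite_mul, mul_ite, zero_mul, mul_zero, Finset.sum_ite_eq, Finset.sum_ite_eq, Finset.mul_sum, Finset.sum_ite_mem]
  rw [hAij]
  by_cases hi : i ∈ P
  · simp only [hi, if_true, one_mul]
    calc ‖∑ k, U i k * (if k ∈ Q then 1 else 0) * (starRingEnd ℂ) (U j k)‖
        ≤ ∑ k, ‖U i k * (if k ∈ Q then 1 else 0) * (starRingEnd ℂ) (U j k)‖ := by
          exact norm_sum_le _ _
      _ ≤ ∑ k : Fin m, (if k ∈ Q then μ ^ 2 else 0) := by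
          apply Finset.sum_le_sum
          intro k _
          by_cases hk : k ∈ Q
          · simp only [hk, if_true, mul_one, norm_mul, Complex.norm_conj]
            calc ‖U i k‖ * ‖U j k‖ ≤ μ * μ :=
                  mul_le_mul (hub i k) (hub j k) (norm_nonneg _) hμ0
              _ = μ ^ 2 := (sq μ).symm
          · simp [hk]
      _ = (Q.card : ℝ) * μ ^ 2 := by
          rw [Finset.sum_ite_mem, Finset.univ_inter, Finset.sum_const, nsmul_eq_mul]
  · simp [hi]

theorem stmt12 {m : ℕ} (U : Matrix (Fin m) (Fin m) ℂ)
    (hU : U ∈ Matrix.unitaryGroup (Fin m) ℂ) (P Q : Finset (Fin m)) (μ : ℝ)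
    (hμ : IsGreatest {x | ∃ k l, x = ‖U k l‖} μ) :
    opnorm1 (Dmat P * (U * Dmat Q * Uᴴ)) ≤ (P.card : ℝ) * Q.card * μ ^ 2 := by
  obtain ⟨⟨k0, l0, hk0⟩, hub'⟩ := hμ
  have hμ0 : 0 ≤ μ := hk0 ▸ norm_nonneg _
  have hub : ∀ k l, ‖U k l‖ ≤ μ := fun k l => hub' ⟨k, l, rfl⟩
  have hbnd : (0:ℝ) ≤ (P.card : ℝ) * Q.card * μ ^ 2 := by positivity
  apply Real.sSup_le _ hbnd
  rintro c ⟨x, hx, rfl⟩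
  set A := Dmat P * (U * Dmat Q * Uᴴ) with hA
  calc vnorm1 (A.mulVec x)
      = ∑ i, ‖∑ j, A i j * x j‖ := by
        simp [vnorm1, Matrix.mulVec, dotProduct]
    _ ≤ ∑ i, ∑ j, ‖A i j‖ * ‖x j‖ := by
        apply Finset.sum_le_sum
        intro i _
        calc ‖∑ j, A i j * x j‖ ≤ ∑ j, ‖A i j * x j‖ :=
              norm_sum_le _ _
          _ = ∑ j, ‖A i j‖ * ‖x j‖ := by
              simp [map_mul]
    _ ≤ ∑ i, ∑ j, ((if i ∈ P then (1:ℝ) else 0) * ((Q.card : ℝ) * μ ^ 2)) * ‖x j‖ := by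
        apply Finset.sum_le_sum
        intro i _
        apply Finset.sum_le_sum
        intro j _
        exact mul_le_mul_of_nonneg_right (entry_bound U P Q μ hμ0 hub i j)
          (norm_nonneg _)
    _ = (∑ i, (if i ∈ P then (1:ℝ) else 0) * ((Q.card : ℝ) * μ ^ 2)) * (∑ j, ‖x j‖) := by
        rw [Finset.sum_mul_sum]
    _ = (P.card : ℝ) * Q.card * μ ^ 2 := by
        have hx' : ∑ j, ‖x j‖ = 1 := hx
        rw [hx', mul_one, ← Finset.sum_mul]
        simp [Finset.sum_ite_mem, mul_assoc]
end

section
/- Let A ∈ ℂ^{m×p} and B ∈ ℂ^{m×q} have all columns of unit Euclidean norm, with coherences μ(A) = max_{i≠j}|a_i* a_j|, μ(B) analogously, and mutual coherence μ̄ = max_{i,j}|a_i* b_j|. If A p = B q for vectors p ∈ ℂ^p, q ∈ ℂ^q, then for every subset P ⊆ {1,…,p}: ‖D_P p‖₁ ≤ |P| · (μ(A)‖p‖₁ + μ̄‖q‖₁) / (1 + μ(A)). -/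
open scoped BigOperators Matrix

theorem stmt14 {m p q : ℕ} (A : Matrix (Fin m) (Fin p) ℂ) (B : Matrix (Fin m) (Fin q) ℂ)
    (hcolA : ∀ j, vnorm2 (fun i => A i j) = 1) (hcolB : ∀ j, vnorm2 (fun i => B i j) = 1)
    (μA μbar : ℝ)
    (hμA : IsGreatest {x | ∃ i j, i ≠ j ∧ x = ‖(Aᴴ * A) i j‖} μA)
    (hμbar : IsGreatest {x | ∃ i j, x = ‖(Aᴴ * B) i j‖} μbar)
    (pv : Fin p → ℂ) (qv : Fin q → ℂ) (h : A.mulVec pv = B.mulVec qv)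
    (P : Finset (Fin p)) :
    vnorm1 ((Dmat P).mulVec pv)
      ≤ (P.card : ℝ) * (μA * vnorm1 pv + μbar * vnorm1 qv) / (1 + μA) := by
  obtain ⟨⟨i0, j0, hij0, hx0⟩, hubA⟩ := hμA
  have hμA0 : 0 ≤ μA := hx0 ▸ norm_nonneg _
  obtain ⟨⟨i1, j1, hx1⟩, hubB⟩ := hμbar
  have hμb0 : 0 ≤ μbar := hx1 ▸ norm_nonneg _
  have hpos : (0:ℝ) < 1 + μA := by linarith
  -- diagonal entries of AᴴA are 1
  have hdiag : ∀ i, (Aᴴ * A) i i = 1 := by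
    intro i
    have h1 := hcolA i
    unfold vnorm2 at h1
    have h2 : ∑ k, ‖A k i‖ ^ 2 = 1 := by
      have hnn : 0 ≤ ∑ k, ‖A k i‖ ^ 2 :=
        Finset.sum_nonneg fun k _ => sq_nonneg _
      nlinarith [Real.sq_sqrt hnn]
    have : (Aᴴ * A) i i = ((∑ k, ‖A k i‖ ^ 2 : ℝ) : ℂ) := by
      simp only [Matrix.mul_apply, Matrix.conjTranspose_apply]
      push_cast
      congr 1
      ext k
      rw [Complex.star_def, mul_comm, Complex.mul_conj, Complex.normSq_eq_norm_sq]
      push_cast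
      ring
    rw [this, h2]; norm_num
  -- key pointwise inequality
  have key : ∀ i, ‖pv i‖ ≤ (μA * vnorm1 pv + μbar * vnorm1 qv) / (1 + μA) := by
    intro i
    rw [le_div_iff₀ hpos]
    have heq : ((Aᴴ * A).mulVec pv) i = ((Aᴴ * B).mulVec qv) i := by
      rw [← Matrix.mulVec_mulVec, ← Matrix.mulVec_mulVec, h]
    simp only [Matrix.mulVec, dotProduct] at heq
    have hsplit : ∑ j, (Aᴴ * A) i j * pv j
        = pv i + ∑ j ∈ Finset.univ.erase i, (Aᴴ * A) i j * pv j := by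
      rw [← Finset.add_sum_erase _ _ (Finset.mem_univ i), hdiag i, one_mul]
    have hpvi : pv i = ∑ j, (Aᴴ * B) i j * qv j
        - ∑ j ∈ Finset.univ.erase i, (Aᴴ * A) i j * pv j := by
      rw [← heq, hsplit]; ring
    have h1 : ‖pv i‖
        ≤ μbar * vnorm1 qv + μA * (vnorm1 pv - ‖pv i‖) := by
      calc ‖pv i‖
          = ‖∑ j, (Aᴴ * B) i j * qv j
            - ∑ j ∈ Finset.univ.erase i, (Aᴴ * A) i j * pv j‖ := by rw [← hpvi]
        _ ≤ ‖∑ j, (Aᴴ * B) i j * qv j‖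
            + ‖∑ j ∈ Finset.univ.erase i, (Aᴴ * A) i j * pv j‖ := by
            exact norm_sub_le _ _
        _ ≤ (∑ j, ‖(Aᴴ * B) i j * qv j‖)
            + ∑ j ∈ Finset.univ.erase i, ‖(Aᴴ * A) i j * pv j‖ :=
            add_le_add (norm_sum_le _ _) (norm_sum_le _ _)
        _ ≤ (∑ j, μbar * ‖qv j‖)
            + ∑ j ∈ Finset.univ.erase i, μA * ‖pv j‖ := by
            refine add_le_add (Finset.sum_le_sum fun j _ => ?_)
              (Finset.sum_le_sum fun j hj => ?_)
            · rw [norm_mul]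
              exact mul_le_mul_of_nonneg_right (hubB ⟨i, j, rfl⟩) (norm_nonneg _)
            · rw [norm_mul]
              refine mul_le_mul_of_nonneg_right (hubA ⟨i, j, ?_, rfl⟩) (norm_nonneg _)
              exact (Finset.ne_of_mem_erase hj).symm
        _ = μbar * vnorm1 qv + μA * (vnorm1 pv - ‖pv i‖) := by
            rw [← Finset.mul_sum, ← Finset.mul_sum]
            unfold vnorm1
            rw [Finset.sum_erase_eq_sub (Finset.mem_univ i)]
    nlinarith
  -- finish
  have hDP : vnorm1 ((Dmat P).mulVec pv) = ∑ i ∈ P, ‖pv i‖ := by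
    unfold vnorm1 Dmat
    rw [← Finset.sum_filter_add_sum_filter_not Finset.univ (· ∈ P)]
    have : ∀ i, ‖(Matrix.diagonal fun i => if i ∈ P then (1:ℂ) else 0).mulVec pv i‖
        = if i ∈ P then ‖pv i‖ else 0 := by
      intro i
      rw [Matrix.mulVec_diagonal]
      split <;> simp
    simp only [this]
    rw [Finset.sum_ite_of_true (by intro i hi; simpa using hi),
        Finset.sum_ite_of_false (by intro i hi; simpa using hi)]
    simp [Finset.filter_mem_eq_inter]
  rw [hDP]
  calc ∑ i ∈ P, ‖pv i‖
      ≤ ∑ _i ∈ P, (μA * vnorm1 pv + μbar * vnorm1 qv) / (1 + μA) :=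
        Finset.sum_le_sum fun i _ => key i
    _ = (P.card : ℝ) * (μA * vnorm1 pv + μbar * vnorm1 qv) / (1 + μA) := by
        rw [Finset.sum_const, nsmul_eq_mul]; ring
end

section
/- Let A ∈ ℂ^{m×p} and B ∈ ℂ^{m×q} have unit-norm columns, coherences μ(A), μ(B), and mutual coherence μ̄ > 0. Suppose A p = B q with (p,q) ≠ 0, p is ε_P-concentrated in 1-norm on P ⊆ {1,…,p}, and q is ε_Q-concentrated in 1-norm on Q ⊆ {1,…,q}. Then |P|·|Q| ≥ [ (1+μ(A))(1−ε_P) − μ(A)|P| ]₊ · [ (1+μ(B))(1−ε_Q) − μ(B)|Q| ]₊ / μ̄². -/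
open scoped BigOperators Matrix

/-- Key inequality: `(1+μ)·∑_{i∈P}|p_i|² − μ·(∑_{i∈P}|p_i|)·‖p‖₁ ≤ μ̄·‖q‖₁·∑_{i∈P}|p_i|`. -/
lemma key_ineq {m p q : ℕ} (A : Matrix (Fin m) (Fin p) ℂ) (B : Matrix (Fin m) (Fin q) ℂ)
    (hcolA : ∀ j, ∑ i, ‖A i j‖ ^ 2 = 1)
    (μ μb : ℝ)
    (hμ : ∀ i j, i ≠ j → ‖(Aᴴ * A) i j‖ ≤ μ)
    (hμb : ∀ i j, ‖(Aᴴ * B) i j‖ ≤ μb)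
    (pv : Fin p → ℂ) (qv : Fin q → ℂ) (h : A.mulVec pv = B.mulVec qv)
    (P : Finset (Fin p)) :
    (1 + μ) * (∑ i ∈ P, ‖pv i‖ ^ 2)
      - μ * (∑ i ∈ P, ‖pv i‖) * (∑ i, ‖pv i‖)
      ≤ μb * (∑ j, ‖qv j‖) * (∑ i ∈ P, ‖pv i‖) := by
  set S : ℂ := ∑ i ∈ P, (starRingEnd ℂ) (pv i) * ((Aᴴ * A).mulVec pv i) with hSdef
  have hGdiag : ∀ i, (Aᴴ * A) i i = 1 := by
    intro i
    rw [Matrix.mul_apply]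
    have e : ∀ k, (Aᴴ) i k * A k i = ((‖A k i‖ ^ 2 : ℝ) : ℂ) := by
      intro k
      rw [Matrix.conjTranspose_apply, Complex.sq_norm, Complex.star_def, mul_comm,
        Complex.mul_conj]
    rw [Finset.sum_congr rfl fun k _ => e k, ← Complex.ofReal_sum, hcolA i,
      Complex.ofReal_one]
  -- lower bound on S.re
  have hlow : (1 + μ) * (∑ i ∈ P, ‖pv i‖ ^ 2)
      - μ * (∑ i ∈ P, ‖pv i‖) * (∑ i, ‖pv i‖) ≤ S.re := by
    have hS1 : S.re = ∑ i ∈ P, ∑ j, ((starRingEnd ℂ) (pv i) * ((Aᴴ * A) i j * pv j)).re := by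
      rw [hSdef, Complex.re_sum]
      refine Finset.sum_congr rfl fun i _ => ?_
      rw [Matrix.mulVec, dotProduct, Finset.mul_sum, Complex.re_sum]
    rw [hS1]
    have hterm : ∀ i ∈ P,
        ‖pv i‖ ^ 2
          - μ * ‖pv i‖ * ((∑ k, ‖pv k‖) - ‖pv i‖)
        ≤ ∑ j, ((starRingEnd ℂ) (pv i) * ((Aᴴ * A) i j * pv j)).re := by
      intro i _
      rw [← Finset.add_sum_erase Finset.univ
        (fun j => ((starRingEnd ℂ) (pv i) * ((Aᴴ * A) i j * pv j)).re) (Finset.mem_univ i)]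
      have hdiag : ((starRingEnd ℂ) (pv i) * ((Aᴴ * A) i i * pv i)).re
          = ‖pv i‖ ^ 2 := by
        rw [hGdiag i, one_mul, mul_comm, Complex.mul_conj, Complex.ofReal_re,
          Complex.sq_norm]
      have hoff : ∀ j ∈ Finset.univ.erase i,
          -(μ * ‖pv i‖ * ‖pv j‖)
            ≤ ((starRingEnd ℂ) (pv i) * ((Aᴴ * A) i j * pv j)).re := by
        intro j hj
        have hij : i ≠ j := fun e => (Finset.mem_erase.mp hj).1 e.symm
        have h1 : ‖(starRingEnd ℂ) (pv i) * ((Aᴴ * A) i j * pv j)‖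
            ≤ μ * ‖pv i‖ * ‖pv j‖ := by
          rw [norm_mul, norm_mul, Complex.norm_conj]
          have := hμ i j hij
          have h2 : ‖(Aᴴ * A) i j‖ * ‖pv j‖
              ≤ μ * ‖pv j‖ :=
            mul_le_mul_of_nonneg_right this (norm_nonneg _)
          nlinarith [norm_nonneg (pv i), norm_nonneg (pv j),
            norm_nonneg ((Aᴴ * A) i j)]
        have h3 := Complex.abs_re_le_norm ((starRingEnd ℂ) (pv i) * ((Aᴴ * A) i j * pv j))
        have h4 := neg_abs_le (((starRingEnd ℂ) (pv i) * ((Aᴴ * A) i j * pv j)).re)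
        linarith [abs_le.mp (le_refl |(((starRingEnd ℂ) (pv i) * ((Aᴴ * A) i j * pv j)).re)|)]
      have hsum := Finset.sum_le_sum hoff
      rw [Finset.sum_neg_distrib] at hsum
      have herase : ∑ j ∈ Finset.univ.erase i, ‖pv j‖
          = (∑ k, ‖pv k‖) - ‖pv i‖ :=
        Finset.sum_erase_eq_sub (Finset.mem_univ i)
      have : ∑ j ∈ Finset.univ.erase i, μ * ‖pv i‖ * ‖pv j‖
          = μ * ‖pv i‖ * ((∑ k, ‖pv k‖) - ‖pv i‖) := by
        rw [← Finset.mul_sum, herase]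
      rw [this] at hsum
      linarith [hdiag]
    have h5 := Finset.sum_le_sum hterm
    refine le_trans (le_of_eq ?_) h5
    have e0 : ∀ i ∈ P, ‖pv i‖ ^ 2
        - μ * ‖pv i‖ * ((∑ k, ‖pv k‖) - ‖pv i‖)
        = (1 + μ) * ‖pv i‖ ^ 2
          - μ * (∑ k, ‖pv k‖) * ‖pv i‖ := fun i _ => by ring
    rw [Finset.sum_congr rfl e0, Finset.sum_sub_distrib, ← Finset.mul_sum, ← Finset.mul_sum]
    ring
  -- upper bound on S.re
  have hrep : ∀ i, (Aᴴ * A).mulVec pv i = (Aᴴ * B).mulVec qv i := by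
    intro i
    rw [← Matrix.mulVec_mulVec, ← Matrix.mulVec_mulVec, h]
  have habs : ∀ i : Fin p, ‖(Aᴴ * B).mulVec qv i‖
      ≤ μb * ∑ j, ‖qv j‖ := by
    intro i
    rw [Matrix.mulVec, dotProduct]
    refine le_trans (norm_sum_le _ _) ?_
    rw [Finset.mul_sum]
    refine Finset.sum_le_sum fun j _ => ?_
    rw [norm_mul]
    exact mul_le_mul_of_nonneg_right (hμb i j) (norm_nonneg _)
  have hupp : S.re ≤ μb * (∑ j, ‖qv j‖) * (∑ i ∈ P, ‖pv i‖) := by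
    have hS2 : S = ∑ i ∈ P, (starRingEnd ℂ) (pv i) * ((Aᴴ * B).mulVec qv i) :=
      Finset.sum_congr rfl fun i _ => by rw [hrep]
    calc S.re ≤ ‖S‖ := Complex.re_le_norm S
      _ ≤ ∑ i ∈ P, ‖pv i‖ * (μb * ∑ j, ‖qv j‖) := by
          rw [hS2]
          refine le_trans (norm_sum_le _ _) (Finset.sum_le_sum fun i _ => ?_)
          rw [norm_mul, Complex.norm_conj]
          exact mul_le_mul_of_nonneg_left (habs i) (norm_nonneg _)
      _ = μb * (∑ j, ‖qv j‖) * (∑ i ∈ P, ‖pv i‖) := by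
          rw [← Finset.sum_mul]; ring
  linarith

/-- Abstract one-sided inequality. -/
lemma side_ineq (μ μb L Lq c sq n ε : ℝ) (hμ : 0 ≤ μ) (hμb : 0 ≤ μb)
    (hL : 0 ≤ L) (hLq : 0 ≤ Lq) (hc : 0 ≤ c) (hn : 0 ≤ n)
    (hεL : 0 ≤ (1 - ε) * L)
    (hKI : (1 + μ) * sq - μ * c * L ≤ μb * Lq * c)
    (hCS : c ^ 2 ≤ n * sq)
    (hconc : (1 - ε) * L ≤ c) :
    ((1 + μ) * (1 - ε) - μ * n) * L ≤ μb * Lq * n := by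
  rcases eq_or_lt_of_le hc with h0 | h0
  · have h1 : (1 - ε) * L = 0 := le_antisymm (h0 ▸ hconc) hεL
    have h2 : ((1 + μ) * (1 - ε) - μ * n) * L = (1 + μ) * ((1 - ε) * L) - μ * n * L := by ring
    rw [h2, h1]
    have : 0 ≤ μ * n * L := by positivity
    have : 0 ≤ μb * Lq * n := by positivity
    linarith
  · have h1 : ((1 + μ) * sq - μ * c * L) * n ≤ μb * Lq * c * n :=
      mul_le_mul_of_nonneg_right hKI hn
    have h2 : (1 + μ) * c ^ 2 ≤ (1 + μ) * (n * sq) :=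
      mul_le_mul_of_nonneg_left hCS (by linarith)
    have h3 : ((1 + μ) * c - μ * L * n) * c ≤ (μb * Lq * n) * c := by nlinarith
    have h4 : (1 + μ) * c - μ * L * n ≤ μb * Lq * n := le_of_mul_le_mul_right h3 h0
    have h5 : (1 + μ) * ((1 - ε) * L) ≤ (1 + μ) * c :=
      mul_le_mul_of_nonneg_left hconc (by linarith)
    nlinarith

/-- concentration: `(1−ε)·‖x‖₁ ≤ ∑_{i∈P}|x_i|`. -/
lemma conc_ineq {n : ℕ} (x : Fin n → ℂ) (P : Finset (Fin n)) (ε : ℝ)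
    (hx : vnorm1 (x - (Dmat P).mulVec x) ≤ ε * vnorm1 x) :
    (1 - ε) * vnorm1 x ≤ ∑ i ∈ P, ‖x i‖ := by
  have hDiff : ∀ i, (x - (Dmat P).mulVec x) i = if i ∈ P then 0 else x i := by
    intro i
    simp only [Pi.sub_apply, Dmat, Matrix.mulVec_diagonal]
    split_ifs <;> simp
  have e0 : vnorm1 (x - (Dmat P).mulVec x)
      = vnorm1 x - ∑ i ∈ P, ‖x i‖ := by
    unfold vnorm1
    have e1 : ∀ i : Fin n, ‖(x - (Dmat P).mulVec x) i‖
        = ‖x i‖ - (if i ∈ P then ‖x i‖ else 0) := by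
      intro i
      rw [hDiff i]
      split_ifs <;> simp
    rw [Finset.sum_congr rfl fun i _ => e1 i, Finset.sum_sub_distrib,
      Finset.sum_ite_mem, Finset.univ_inter]
  rw [e0] at hx
  nlinarith [hx]

theorem stmt15 {m p q : ℕ} (A : Matrix (Fin m) (Fin p) ℂ) (B : Matrix (Fin m) (Fin q) ℂ)
    (hcolA : ∀ j, vnorm2 (fun i => A i j) = 1) (hcolB : ∀ j, vnorm2 (fun i => B i j) = 1)
    (μA μB μbar : ℝ)
    (hμA : IsGreatest {x | ∃ i j, i ≠ j ∧ x = ‖(Aᴴ * A) i j‖} μA)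
    (hμB : IsGreatest {x | ∃ i j, i ≠ j ∧ x = ‖(Bᴴ * B) i j‖} μB)
    (hμbar : IsGreatest {x | ∃ i j, x = ‖(Aᴴ * B) i j‖} μbar)
    (hμbarpos : 0 < μbar)
    (pv : Fin p → ℂ) (qv : Fin q → ℂ) (h : A.mulVec pv = B.mulVec qv)
    (hne : pv ≠ 0 ∨ qv ≠ 0)
    (P : Finset (Fin p)) (Q : Finset (Fin q))
    (εP εQ : ℝ) (hεP : εP ∈ Set.Icc (0 : ℝ) 1) (hεQ : εQ ∈ Set.Icc (0 : ℝ) 1)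
    (hpc : vnorm1 (pv - (Dmat P).mulVec pv) ≤ εP * vnorm1 pv)
    (hqc : vnorm1 (qv - (Dmat Q).mulVec qv) ≤ εQ * vnorm1 qv) :
    ((P.card : ℝ) * Q.card)
      ≥ max ((1 + μA) * (1 - εP) - μA * P.card) 0 *
          max ((1 + μB) * (1 - εQ) - μB * Q.card) 0 / μbar ^ 2 := by
  -- column norm sums
  have hsq : ∀ {k : ℕ} (C : Matrix (Fin m) (Fin k) ℂ),
      (∀ j, vnorm2 (fun i => C i j) = 1) → ∀ j, ∑ i, ‖C i j‖ ^ 2 = 1 := by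
    intro k C hC j
    have h1 : (0:ℝ) ≤ ∑ i, ‖C i j‖ ^ 2 :=
      Finset.sum_nonneg fun _ _ => sq_nonneg _
    have h2 := hC j
    unfold vnorm2 at h2
    nlinarith [Real.sq_sqrt h1, h2]
  have hcolA' := hsq A hcolA
  have hcolB' := hsq B hcolB
  -- coherence bounds
  have hμA0 : 0 ≤ μA := by
    obtain ⟨i, j, _, hx⟩ := hμA.1
    rw [hx]; exact norm_nonneg _
  have hμB0 : 0 ≤ μB := by
    obtain ⟨i, j, _, hx⟩ := hμB.1
    rw [hx]; exact norm_nonneg _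
  have hμbar0 : 0 ≤ μbar := le_of_lt hμbarpos
  have hμAub : ∀ i j, i ≠ j → ‖(Aᴴ * A) i j‖ ≤ μA :=
    fun i j hij => hμA.2 ⟨i, j, hij, rfl⟩
  have hμBub : ∀ i j, i ≠ j → ‖(Bᴴ * B) i j‖ ≤ μB :=
    fun i j hij => hμB.2 ⟨i, j, hij, rfl⟩
  have hμbarAB : ∀ i j, ‖(Aᴴ * B) i j‖ ≤ μbar :=
    fun i j => hμbar.2 ⟨i, j, rfl⟩
  have hμbarBA : ∀ i j, ‖(Bᴴ * A) i j‖ ≤ μbar := by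
    intro i j
    have e : (Bᴴ * A) i j = (starRingEnd ℂ) ((Aᴴ * B) j i) := by
      rw [Matrix.mul_apply, Matrix.mul_apply, map_sum]
      refine Finset.sum_congr rfl fun k _ => ?_
      simp only [Matrix.conjTranspose_apply, map_mul, Complex.star_def, Complex.conj_conj]
      ring
    rw [e, Complex.norm_conj]
    exact hμbar.2 ⟨j, i, rfl⟩
  -- shorthands
  set Lp := vnorm1 pv with hLp
  set Lq := vnorm1 qv with hLq
  have hLp0 : 0 ≤ Lp := Finset.sum_nonneg fun _ _ => norm_nonneg _
  have hLq0 : 0 ≤ Lq := Finset.sum_nonneg fun _ _ => norm_nonneg _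
  set cP := ∑ i ∈ P, ‖pv i‖ with hcP
  set cQ := ∑ j ∈ Q, ‖qv j‖ with hcQ
  have hcP0 : 0 ≤ cP := Finset.sum_nonneg fun _ _ => norm_nonneg _
  have hcQ0 : 0 ≤ cQ := Finset.sum_nonneg fun _ _ => norm_nonneg _
  -- the two one-sided inequalities
  have sideA : ((1 + μA) * (1 - εP) - μA * P.card) * Lp ≤ μbar * Lq * P.card := by
    refine side_ineq μA μbar Lp Lq cP (∑ i ∈ P, ‖pv i‖ ^ 2) P.card εP
      hμA0 hμbar0 hLp0 hLq0 hcP0 (Nat.cast_nonneg _) ?_ ?_ ?_ ?_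
    · have h1 : 0 ≤ 1 - εP := by linarith [hεP.2]
      positivity
    · exact key_ineq A B hcolA' μA μbar hμAub hμbarAB pv qv h P
    · exact_mod_cast sq_sum_le_card_mul_sum_sq (s := P) (f := fun i => ‖pv i‖)
    · exact conc_ineq pv P εP hpc
  have sideB : ((1 + μB) * (1 - εQ) - μB * Q.card) * Lq ≤ μbar * Lp * Q.card := by
    refine side_ineq μB μbar Lq Lp cQ (∑ j ∈ Q, ‖qv j‖ ^ 2) Q.card εQ
      hμB0 hμbar0 hLq0 hLp0 hcQ0 (Nat.cast_nonneg _) ?_ ?_ ?_ ?_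
    · have h1 : 0 ≤ 1 - εQ := by linarith [hεQ.2]
      positivity
    · exact key_ineq B A hcolB' μB μbar hμBub hμbarBA qv pv h.symm Q
    · exact_mod_cast sq_sum_le_card_mul_sum_sq (s := Q) (f := fun j => ‖qv j‖)
    · exact conc_ineq qv Q εQ hqc
  -- positivity of norms
  have hpos : ∀ {k : ℕ} (x : Fin k → ℂ), x ≠ 0 → 0 < vnorm1 x := by
    intro k x hx
    rcases lt_or_eq_of_le (Finset.sum_nonneg fun (i : Fin k) _ => norm_nonneg (x i)) with h1 | h1
    · exact h1
    · exfalso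
      apply hx
      funext i
      have := (Finset.sum_eq_zero_iff_of_nonneg
        (fun (i : Fin k) _ => norm_nonneg (x i))).mp h1.symm i (Finset.mem_univ i)
      exact norm_eq_zero.mp this
  -- final assembly
  set bA := (1 + μA) * (1 - εP) - μA * P.card with hbA
  set bB := (1 + μB) * (1 - εQ) - μB * Q.card with hbB
  rcases le_or_gt bA 0 with hA0 | hA0
  · rw [max_eq_right hA0, zero_mul, zero_div]
    positivity
  rcases le_or_gt bB 0 with hB0 | hB0
  · rw [max_eq_right hB0, mul_zero, zero_div]
    positivity
  rw [max_eq_left hA0.le, max_eq_left hB0.le, ge_iff_le,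
    div_le_iff₀ (by positivity : (0:ℝ) < μbar ^ 2)]
  -- both norms positive
  have hLpLq : 0 < Lp ∧ 0 < Lq := by
    rcases hne with hp | hq
    · have hLp' : 0 < Lp := hpos pv hp
      have h1 : 0 < bA * Lp := mul_pos hA0 hLp'
      have h2 : 0 < μbar * Lq * P.card := lt_of_lt_of_le h1 sideA
      have hLq' : 0 < Lq := by
        by_contra hc
        push_neg at hc
        have : Lq = 0 := le_antisymm hc hLq0
        rw [this] at h2
        nlinarith [h2]
      exact ⟨hLp', hLq'⟩
    · have hLq' : 0 < Lq := hpos qv hq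
      have h1 : 0 < bB * Lq := mul_pos hB0 hLq'
      have h2 : 0 < μbar * Lp * Q.card := lt_of_lt_of_le h1 sideB
      have hLp' : 0 < Lp := by
        by_contra hc
        push_neg at hc
        have : Lp = 0 := le_antisymm hc hLp0
        rw [this] at h2
        nlinarith [h2]
      exact ⟨hLp', hLq'⟩
  obtain ⟨hLpp, hLqp⟩ := hLpLq
  have hmul : (bA * Lp) * (bB * Lq) ≤ (μbar * Lq * P.card) * (μbar * Lp * Q.card) :=
    mul_le_mul sideA sideB (by positivity) (le_trans (by positivity) sideA)
  have hfinal : bA * bB * (Lp * Lq) ≤ μbar ^ 2 * ((P.card : ℝ) * Q.card) * (Lp * Lq) := by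
    nlinarith [hmul]
  have := le_of_mul_le_mul_right hfinal (by positivity : (0:ℝ) < Lp * Lq)
  linarith
end

section
/- Let A ∈ ℂ^{m×p} and B ∈ ℂ^{m×q} have unit-norm columns with coherences μ(A), μ(B) and mutual coherence μ̄ > 0. If A p = B q with (p,q) ≠ 0, then ‖p‖₀ ‖q‖₀ ≥ [1 + μ(A)(1 − ‖p‖₀)]₊ · [1 + μ(B)(1 − ‖q‖₀)]₊ / μ̄². -/
open scoped BigOperators Matrix

/-! ### Auxiliary lemmas -/

lemma dot_eq {m n r : ℕ} (A : Matrix (Fin m) (Fin n) ℂ) (B : Matrix (Fin m) (Fin r) ℂ)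
    (v : Fin n → ℂ) (w : Fin r → ℂ) :
    star (A.mulVec v) ⬝ᵥ B.mulVec w = star v ⬝ᵥ ((Aᴴ * B).mulVec w) := by
  rw [Matrix.dotProduct_mulVec, Matrix.star_mulVec, Matrix.vecMul_vecMul,
    ← Matrix.dotProduct_mulVec]

lemma re_dot_self {n : ℕ} (x : Fin n → ℂ) :
    (star x ⬝ᵥ x).re = ∑ k, ‖x k‖ ^ 2 := by
  simp only [dotProduct, Pi.star_apply, Complex.re_sum]
  refine Finset.sum_congr rfl fun k _ => ?_
  rw [RCLike.star_def, ← Complex.normSq_eq_conj_mul_self, Complex.ofReal_re,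
    Complex.normSq_eq_norm_sq]

lemma re_dot_expand {n r : ℕ} (G : Matrix (Fin n) (Fin r) ℂ) (v : Fin n → ℂ) (w : Fin r → ℂ) :
    (star v ⬝ᵥ G.mulVec w).re
      = ∑ i, ∑ j, ((starRingEnd ℂ) (v i) * (G i j * w j)).re := by
  simp only [dotProduct, Matrix.mulVec, Pi.star_apply, Finset.mul_sum, Complex.re_sum,
    RCLike.star_def]

lemma upper_bound {n r : ℕ} (G : Matrix (Fin n) (Fin r) ℂ) (μ : ℝ)
    (hG : ∀ i j, ‖G i j‖ ≤ μ) (v : Fin n → ℂ) (w : Fin r → ℂ) :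
    (star v ⬝ᵥ G.mulVec w).re
      ≤ μ * ((∑ i, ‖v i‖) * (∑ j, ‖w j‖)) := by
  rw [re_dot_expand]
  have key : ∀ i ∈ (Finset.univ : Finset (Fin n)), ∀ j ∈ (Finset.univ : Finset (Fin r)),
      ((starRingEnd ℂ) (v i) * (G i j * w j)).re
        ≤ ‖v i‖ * (μ * ‖w j‖) := by
    intro i _ j _
    calc ((starRingEnd ℂ) (v i) * (G i j * w j)).re
        ≤ ‖(starRingEnd ℂ) (v i) * (G i j * w j)‖ := Complex.re_le_norm _
      _ = ‖G i j‖ * (‖v i‖ * ‖w j‖) := by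
          simp [map_mul]; ring
      _ ≤ μ * (‖v i‖ * ‖w j‖) :=
          mul_le_mul_of_nonneg_right (hG i j) (by positivity)
      _ = ‖v i‖ * (μ * ‖w j‖) := by ring
  calc ∑ i, ∑ j, ((starRingEnd ℂ) (v i) * (G i j * w j)).re
      ≤ ∑ i, ∑ j, ‖v i‖ * (μ * ‖w j‖) :=
        Finset.sum_le_sum fun i hi => Finset.sum_le_sum (key i hi)
    _ = μ * ((∑ i, ‖v i‖) * (∑ j, ‖w j‖)) := by
        rw [Finset.sum_mul_sum]
        simp [Finset.mul_sum, Finset.sum_mul]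
        exact Finset.sum_congr rfl fun i _ => Finset.sum_congr rfl fun j _ => by ring

lemma lower_bound {n : ℕ} (G : Matrix (Fin n) (Fin n) ℂ) (μ : ℝ)
    (hdiag : ∀ i, G i i = 1) (hoff : ∀ i j, i ≠ j → ‖G i j‖ ≤ μ)
    (v : Fin n → ℂ) :
    (1 + μ) * (∑ i, ‖v i‖ ^ 2) - μ * (∑ i, ‖v i‖) ^ 2
      ≤ (star v ⬝ᵥ G.mulVec v).re := by
  rw [re_dot_expand]
  have key : ∀ i : Fin n,
      ‖v i‖ ^ 2
        - μ * (‖v i‖ * ((∑ j, ‖v j‖) - ‖v i‖))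
      ≤ ∑ j, ((starRingEnd ℂ) (v i) * (G i j * v j)).re := by
    intro i
    have hsplit : ∑ j, ((starRingEnd ℂ) (v i) * (G i j * v j)).re
        = ((starRingEnd ℂ) (v i) * (G i i * v i)).re
          + ∑ j ∈ Finset.univ.erase i, ((starRingEnd ℂ) (v i) * (G i j * v j)).re :=
      (Finset.add_sum_erase _ _ (Finset.mem_univ i)).symm
    rw [hsplit, hdiag i]
    have hdiagval : ((starRingEnd ℂ) (v i) * ((1 : ℂ) * v i)).re = ‖v i‖ ^ 2 := by
      rw [one_mul, ← Complex.normSq_eq_conj_mul_self, Complex.ofReal_re, Complex.normSq_eq_norm_sq]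
    rw [hdiagval]
    have hterm : ∀ j ∈ Finset.univ.erase i,
        -(μ * (‖v i‖ * ‖v j‖))
          ≤ ((starRingEnd ℂ) (v i) * (G i j * v j)).re := by
      intro j hj
      have hij : i ≠ j := (Finset.ne_of_mem_erase hj).symm
      have h1 : ‖(starRingEnd ℂ) (v i) * (G i j * v j)‖
          ≤ μ * (‖v i‖ * ‖v j‖) := by
        rw [norm_mul, norm_mul, Complex.norm_conj]
        calc ‖v i‖ * (‖G i j‖ * ‖v j‖)
            = ‖G i j‖ * (‖v i‖ * ‖v j‖) := by ring
          _ ≤ μ * (‖v i‖ * ‖v j‖) :=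
              mul_le_mul_of_nonneg_right (hoff i j hij) (by positivity)
      have h3 := Complex.abs_re_le_norm ((starRingEnd ℂ) (v i) * (G i j * v j))
      have h2 := neg_abs_le ((starRingEnd ℂ) (v i) * (G i j * v j)).re
      linarith
    have hsum := Finset.sum_le_sum hterm
    have herase : ∑ j ∈ Finset.univ.erase i, (μ * (‖v i‖ * ‖v j‖))
        = μ * (‖v i‖ * ((∑ j, ‖v j‖) - ‖v i‖)) := by
      rw [← Finset.mul_sum, ← Finset.mul_sum,
        Finset.sum_erase_eq_sub (Finset.mem_univ i)]
    rw [Finset.sum_neg_distrib] at hsum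
    linarith [herase ▸ hsum]
  calc (1 + μ) * (∑ i, ‖v i‖ ^ 2) - μ * (∑ i, ‖v i‖) ^ 2
      = ∑ i, (‖v i‖ ^ 2
          - μ * (‖v i‖ * ((∑ j, ‖v j‖) - ‖v i‖))) := by
        have e : ∀ i ∈ (Finset.univ : Finset (Fin n)),
            ‖v i‖ ^ 2
              - μ * (‖v i‖ * ((∑ j, ‖v j‖) - ‖v i‖))
            = (1 + μ) * ‖v i‖ ^ 2
              - μ * (‖v i‖ * (∑ j, ‖v j‖)) := fun i _ => by ring
        rw [Finset.sum_congr rfl e, Finset.sum_sub_distrib, ← Finset.mul_sum, ← Finset.mul_sum,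
          ← Finset.sum_mul, ← sq]
    _ ≤ _ := Finset.sum_le_sum fun i _ => key i

lemma cauchy0 {n : ℕ} (v : Fin n → ℂ) :
    (∑ i, ‖v i‖) ^ 2 ≤ (norm0 v : ℝ) * ∑ i, ‖v i‖ ^ 2 := by
  classical
  set s := Finset.univ.filter (fun i => v i ≠ 0) with hs
  have h1 : ∑ i, ‖v i‖ = ∑ i ∈ s, ‖v i‖ := by
    refine (Finset.sum_subset (Finset.subset_univ s) ?_).symm
    intro i _ hi
    simp only [hs, Finset.mem_filter, Finset.mem_univ, true_and, not_not] at hi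
    simp [hi]
  have h2 : ∑ i, ‖v i‖ ^ 2 = ∑ i ∈ s, ‖v i‖ ^ 2 := by
    refine (Finset.sum_subset (Finset.subset_univ s) ?_).symm
    intro i _ hi
    simp only [hs, Finset.mem_filter, Finset.mem_univ, true_and, not_not] at hi
    simp [hi]
  rw [h1, h2, norm0]
  exact sq_sum_le_card_mul_sum_sq

lemma gram_diag {m n : ℕ} (A : Matrix (Fin m) (Fin n) ℂ)
    (hcol : ∀ j, vnorm2 (fun i => A i j) = 1) (j : Fin n) : (Aᴴ * A) j j = 1 := by
  have h1 : ∑ i, ‖A i j‖ ^ 2 = 1 := by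
    have h := hcol j
    rw [vnorm2] at h
    exact Real.sqrt_eq_one.mp h
  have h2 : ∀ k, (Aᴴ j k) * A k j = ((‖A k j‖ ^ 2 : ℝ) : ℂ) := by
    intro k
    rw [Matrix.conjTranspose_apply, RCLike.star_def, ← Complex.normSq_eq_conj_mul_self,
      Complex.normSq_eq_norm_sq]
  calc (Aᴴ * A) j j = ∑ k, (Aᴴ j k) * A k j := Matrix.mul_apply
    _ = ((∑ k, ‖A k j‖ ^ 2 : ℝ) : ℂ) := by
        rw [Complex.ofReal_sum]
        exact Finset.sum_congr rfl fun k _ => h2 k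
    _ = 1 := by rw [h1]; norm_num

lemma p1_pos {n : ℕ} (v : Fin n → ℂ) (hv : v ≠ 0) : 0 < ∑ i, ‖v i‖ := by
  obtain ⟨i, hi⟩ := Function.ne_iff.mp hv
  exact Finset.sum_pos' (fun j _ => norm_nonneg _)
    ⟨i, Finset.mem_univ i, norm_pos_iff.mpr hi⟩

theorem stmt16 {m p q : ℕ} (A : Matrix (Fin m) (Fin p) ℂ) (B : Matrix (Fin m) (Fin q) ℂ)
    (hcolA : ∀ j, vnorm2 (fun i => A i j) = 1) (hcolB : ∀ j, vnorm2 (fun i => B i j) = 1)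
    (μA μB μbar : ℝ)
    (hμA : IsGreatest {x | ∃ i j, i ≠ j ∧ x = ‖(Aᴴ * A) i j‖} μA)
    (hμB : IsGreatest {x | ∃ i j, i ≠ j ∧ x = ‖(Bᴴ * B) i j‖} μB)
    (hμbar : IsGreatest {x | ∃ i j, x = ‖(Aᴴ * B) i j‖} μbar)
    (hμbarpos : 0 < μbar)
    (pv : Fin p → ℂ) (qv : Fin q → ℂ) (h : A.mulVec pv = B.mulVec qv)
    (hne : pv ≠ 0 ∨ qv ≠ 0) :
    ((norm0 pv : ℝ) * norm0 qv)
      ≥ max (1 + μA * (1 - (norm0 pv : ℝ))) 0 *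
          max (1 + μB * (1 - (norm0 qv : ℝ))) 0 / μbar ^ 2 := by
  classical
  set np : ℝ := (norm0 pv : ℝ) with hnp
  set nq : ℝ := (norm0 qv : ℝ) with hnq
  have hnp0 : 0 ≤ np := Nat.cast_nonneg _
  have hnq0 : 0 ≤ nq := Nat.cast_nonneg _
  set P1 : ℝ := ∑ i, ‖pv i‖ with hP1def
  set P2 : ℝ := ∑ i, ‖pv i‖ ^ 2 with hP2def
  set Q1 : ℝ := ∑ i, ‖qv i‖ with hQ1def
  set Q2 : ℝ := ∑ i, ‖qv i‖ ^ 2 with hQ2def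
  set S : ℝ := ∑ k, ‖(A.mulVec pv) k‖ ^ 2 with hSdef
  have hS0 : 0 ≤ S :=
    Finset.sum_nonneg fun k _ => pow_nonneg (norm_nonneg _) 2
  -- coherence facts
  have hμA0 : 0 ≤ μA := by
    obtain ⟨i, j, hij, hval⟩ := hμA.1
    rw [hval]; exact norm_nonneg _
  have hμB0 : 0 ≤ μB := by
    obtain ⟨i, j, hij, hval⟩ := hμB.1
    rw [hval]; exact norm_nonneg _
  have hoffA : ∀ i j, i ≠ j → ‖(Aᴴ * A) i j‖ ≤ μA :=
    fun i j hij => hμA.2 ⟨i, j, hij, rfl⟩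
  have hoffB : ∀ i j, i ≠ j → ‖(Bᴴ * B) i j‖ ≤ μB :=
    fun i j hij => hμB.2 ⟨i, j, hij, rfl⟩
  have hABent : ∀ i j, ‖(Aᴴ * B) i j‖ ≤ μbar :=
    fun i j => hμbar.2 ⟨i, j, rfl⟩
  -- three expressions for S
  have hSA : S = (star pv ⬝ᵥ (Aᴴ * A).mulVec pv).re := by
    rw [← dot_eq A A pv pv, re_dot_self]
  have hSB : S = (star qv ⬝ᵥ (Bᴴ * B).mulVec qv).re := by
    rw [← dot_eq B B qv qv, re_dot_self, hSdef, h]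
  have hSAB : S = (star pv ⬝ᵥ (Aᴴ * B).mulVec qv).re := by
    rw [← dot_eq A B pv qv, hSdef, h, re_dot_self]
  -- bounds
  have hA : (1 + μA) * P2 - μA * P1 ^ 2 ≤ S := by
    rw [hSA]; exact lower_bound _ _ (gram_diag A hcolA) hoffA pv
  have hB : (1 + μB) * Q2 - μB * Q1 ^ 2 ≤ S := by
    rw [hSB]; exact lower_bound _ _ (gram_diag B hcolB) hoffB qv
  have hAB : S ≤ μbar * (P1 * Q1) := by
    rw [hSAB]; exact upper_bound _ _ hABent pv qv
  have hCp : P1 ^ 2 ≤ np * P2 := cauchy0 pv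
  have hCq : Q1 ^ 2 ≤ nq * Q2 := cauchy0 qv
  set tA : ℝ := 1 + μA * (1 - np) with htAdef
  set tB : ℝ := 1 + μB * (1 - nq) with htBdef
  have hKA : tA * P1 ^ 2 ≤ S * np := by
    nlinarith [mul_le_mul_of_nonneg_right hA hnp0,
      mul_le_mul_of_nonneg_left hCp (by linarith : (0:ℝ) ≤ 1 + μA)]
  have hKB : tB * Q1 ^ 2 ≤ S * nq := by
    nlinarith [mul_le_mul_of_nonneg_right hB hnq0,
      mul_le_mul_of_nonneg_left hCq (by linarith : (0:ℝ) ≤ 1 + μB)]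
  rcases le_or_gt tA 0 with htA | htA
  · rw [max_eq_right htA, zero_mul, zero_div]
    exact mul_nonneg hnp0 hnq0
  rcases le_or_gt tB 0 with htB | htB
  · rw [max_eq_right htB, mul_zero, zero_div]
    exact mul_nonneg hnp0 hnq0
  -- both brackets positive: show pv ≠ 0 and qv ≠ 0
  have hP1nn : 0 ≤ P1 := Finset.sum_nonneg fun i _ => norm_nonneg _
  have hQ1nn : 0 ≤ Q1 := Finset.sum_nonneg fun i _ => norm_nonneg _
  have hpq : pv ≠ 0 ∧ qv ≠ 0 := by
    constructor
    · intro hp0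
      have hq0 : qv ≠ 0 := hne.resolve_left (fun h' => (h' hp0).elim)
      have hP1z : P1 = 0 := by
        rw [hP1def, hp0]; simp
      have hSz : S = 0 := le_antisymm (by rw [hP1z] at hAB; linarith) hS0
      have hQ1pos : 0 < Q1 := p1_pos qv hq0
      have hle : tB * Q1 ^ 2 ≤ 0 := by rw [hSz, zero_mul] at hKB; exact hKB
      have hlt : 0 < tB * Q1 ^ 2 := mul_pos htB (pow_pos hQ1pos 2)
      linarith
    · intro hq0
      have hp0 : pv ≠ 0 := hne.resolve_right (fun h' => (h' hq0).elim)
      have hQ1z : Q1 = 0 := by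
        rw [hQ1def, hq0]; simp
      have hSz : S = 0 := le_antisymm (by rw [hQ1z] at hAB; linarith) hS0
      have hP1pos : 0 < P1 := p1_pos pv hp0
      have hle : tA * P1 ^ 2 ≤ 0 := by rw [hSz, zero_mul] at hKA; exact hKA
      have hlt : 0 < tA * P1 ^ 2 := mul_pos htA (pow_pos hP1pos 2)
      linarith
  have hP1 : 0 < P1 := p1_pos pv hpq.1
  have hQ1 : 0 < Q1 := p1_pos qv hpq.2
  have hcancel : tA * tB ≤ μbar ^ 2 * (np * nq) := by
    have h1 : (tA * P1 ^ 2) * (tB * Q1 ^ 2) ≤ (S * np) * (S * nq) :=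
      mul_le_mul hKA hKB (mul_pos htB (pow_pos hQ1 2)).le (mul_nonneg hS0 hnp0)
    have h2 : S * S ≤ (μbar * (P1 * Q1)) * (μbar * (P1 * Q1)) :=
      mul_self_le_mul_self hS0 hAB
    have h3 : (tA * tB) * (P1 ^ 2 * Q1 ^ 2) ≤ (μbar ^ 2 * (np * nq)) * (P1 ^ 2 * Q1 ^ 2) := by
      calc (tA * tB) * (P1 ^ 2 * Q1 ^ 2) = (tA * P1 ^ 2) * (tB * Q1 ^ 2) := by ring
        _ ≤ (S * np) * (S * nq) := h1
        _ = (S * S) * (np * nq) := by ring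
        _ ≤ ((μbar * (P1 * Q1)) * (μbar * (P1 * Q1))) * (np * nq) :=
            mul_le_mul_of_nonneg_right h2 (mul_nonneg hnp0 hnq0)
        _ = (μbar ^ 2 * (np * nq)) * (P1 ^ 2 * Q1 ^ 2) := by ring
    exact le_of_mul_le_mul_right h3 (by positivity)
  rw [max_eq_left htA.le, max_eq_left htB.le, ge_iff_le,
    div_le_iff₀ (by positivity : (0:ℝ) < μbar ^ 2)]
  exact hcancel.trans_eq (by ring)
end

section
/- Let A = (a₁ … a_m)* where a₁,…,a_m are independent random vectors each uniformly distributed on B_p(0,r) ⊂ ℂ^p, r > 0. Then for all u ∈ ℂ^p \ {0}, v ∈ ℂ^m, and δ > 0: P[ ‖A u + v‖₂ < δ ] ≤ C(p,m,r) · δ^{2m} / ‖u‖₂^{2m}, with C(p,m,r) = (π V_{p−1}(r)/V_p(r))^m. -/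
open scoped BigOperators Matrix

open MeasureTheory ProbabilityTheory

def ballC (p : ℕ) (r : ℝ) : Set (Fin p → ℂ) := {b | vnorm2 b ≤ r}

noncomputable def Vball (k : ℕ) (r : ℝ) : ℝ := (volume (ballC k r)).toReal

open MeasureTheory
open scoped ENNReal NNReal

lemma abs_le_vnorm2 {m : ℕ} (x : Fin m → ℂ) (i : Fin m) : ‖x i‖ ≤ vnorm2 x := by
  rw [vnorm2, ← Real.sqrt_sq (norm_nonneg (x i))]
  exact Real.sqrt_le_sqrt (Finset.single_le_sum
    (f := fun j => ‖x j‖ ^ 2) (fun j _ => sq_nonneg _) (Finset.mem_univ i))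

lemma continuous_vnorm2 {m : ℕ} : Continuous (vnorm2 (m := m)) :=
  Real.continuous_sqrt.comp (continuous_finset_sum _ fun i _ =>
    (continuous_norm.comp (continuous_apply i)).pow 2)

lemma measurableSet_ballC {p : ℕ} {r : ℝ} : MeasurableSet (ballC p r) :=
  continuous_vnorm2.measurable measurableSet_Iic

lemma volume_ballC_lt_top (p : ℕ) (r : ℝ) : volume (ballC p r) < ⊤ := by
  have hsub : ballC p r ⊆ Set.pi Set.univ (fun _ : Fin p => Metric.closedBall (0:ℂ) r) := by
    intro x hx i _
    simpa [Complex.dist_eq] using (abs_le_vnorm2 x i).trans hx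
  refine lt_of_le_of_lt (measure_mono hsub) ?_
  rw [volume_pi_pi]
  exact ENNReal.prod_lt_top fun i _ => by
    simp only [Complex.volume_closedBall]
    exact ENNReal.mul_lt_top (by simp [ENNReal.pow_lt_top, ENNReal.ofReal_lt_top])
      ENNReal.coe_lt_top

lemma volume_ballC_pos (p : ℕ) {r : ℝ} (hr : 0 < r) : 0 < volume (ballC p r) := by
  set ε : ℝ := r / (p + 1) with hε
  have hε0 : 0 < ε := by positivity
  have hsub : Set.pi Set.univ (fun _ : Fin p => Metric.closedBall (0:ℂ) ε) ⊆ ballC p r := by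
    intro x hx
    have hb : ∀ i, ‖x i‖ ≤ ε := fun i => by
      simpa [Complex.dist_eq] using hx i (Set.mem_univ i)
    have hsum : ∑ i, ‖x i‖ ^ 2 ≤ r ^ 2 := by
      calc ∑ i, ‖x i‖ ^ 2 ≤ ∑ _i : Fin p, ε ^ 2 :=
            Finset.sum_le_sum fun i _ => pow_le_pow_left₀ (norm_nonneg _) (hb i) 2
        _ = p * ε ^ 2 := by simp [mul_comm]
        _ ≤ r ^ 2 := by
            rw [hε, div_pow]
            rw [mul_div_assoc', div_le_iff₀ (by positivity)]
            nlinarith [sq_nonneg r, Nat.cast_nonneg (α := ℝ) p, sq_nonneg ((p:ℝ)+1),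
              mul_nonneg (sq_nonneg r) (Nat.cast_nonneg (α := ℝ) p),
              mul_nonneg (mul_nonneg (sq_nonneg r) (Nat.cast_nonneg (α := ℝ) p))
                (Nat.cast_nonneg (α := ℝ) p)]
    show vnorm2 x ≤ r
    rw [vnorm2, ← Real.sqrt_sq hr.le]
    exact Real.sqrt_le_sqrt hsum
  refine lt_of_lt_of_le ?_ (measure_mono hsub)
  rw [volume_pi_pi, pos_iff_ne_zero, Finset.prod_ne_zero_iff]
  intro i _
  simp only [Complex.volume_closedBall]
  refine mul_ne_zero (pow_ne_zero _ ?_) ?_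
  · exact (ENNReal.ofReal_pos.mpr hε0).ne'
  · simp only [ne_eq, ENNReal.coe_eq_zero, ← NNReal.coe_eq_zero, NNReal.coe_real_pi]
    exact Real.pi_ne_zero

noncomputable def Lmap {p : ℕ} (B : OrthonormalBasis (Fin p) ℂ (EuclideanSpace ℂ (Fin p))) :
    (Fin p → ℂ) ≃ₗ[ℂ] (Fin p → ℂ) :=
  (WithLp.linearEquiv 2 ℂ (Fin p → ℂ)).symm ≪≫ₗ
    (B.repr.toLinearEquiv ≪≫ₗ WithLp.linearEquiv 2 ℂ (Fin p → ℂ))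

lemma vnorm2_eu {p : ℕ} (y : EuclideanSpace ℂ (Fin p)) :
    vnorm2 (WithLp.equiv 2 (Fin p → ℂ) y) = ‖y‖ := by
  rw [EuclideanSpace.norm_eq]
  simp [vnorm2]

lemma Lmap_apply {p : ℕ} (B : OrthonormalBasis (Fin p) ℂ (EuclideanSpace ℂ (Fin p)))
    (x : Fin p → ℂ) :
    Lmap B x = WithLp.equiv 2 (Fin p → ℂ)
      (B.repr ((WithLp.equiv 2 (Fin p → ℂ)).symm x)) := rfl

lemma vnorm2_Lmap {p : ℕ} (B : OrthonormalBasis (Fin p) ℂ (EuclideanSpace ℂ (Fin p)))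
    (x : Fin p → ℂ) : vnorm2 (Lmap B x) = vnorm2 x := by
  rw [Lmap_apply, vnorm2_eu, LinearIsometryEquiv.norm_map,
    ← vnorm2_eu ((WithLp.equiv 2 (Fin p → ℂ)).symm x), Equiv.apply_symm_apply]

lemma map_Lmap_volume {p : ℕ} (B : OrthonormalBasis (Fin p) ℂ (EuclideanSpace ℂ (Fin p))) :
    Measure.map (⇑(Lmap B)) volume = volume := by
  set Lc := (Lmap B).toContinuousLinearEquiv with hLcdef
  have hLc : ⇑Lc = ⇑(Lmap B) := rfl
  haveI : (volume.map ⇑Lc).IsAddHaarMeasure := Lc.isAddHaarMeasure_map volume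
  have huniq := Measure.isAddLeftInvariant_eq_smul (volume.map ⇑Lc) volume
  set c := Measure.addHaarScalarFactor (volume.map ⇑Lc) volume with hc
  have hpre : ⇑Lc ⁻¹' ballC p 1 = ballC p 1 := by
    ext x
    simp only [Set.mem_preimage, ballC, Set.mem_setOf_eq, hLc, vnorm2_Lmap]
  have h1 : (volume.map ⇑Lc) (ballC p 1) = volume (ballC p 1) := by
    rw [Measure.map_apply Lc.continuous.measurable measurableSet_ballC, hpre]
  have h2 : (c : ℝ≥0∞) * volume (ballC p 1) = volume (ballC p 1) := by
    conv_rhs => rw [← h1, huniq]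
    rw [Measure.smul_apply, ENNReal.smul_def, smul_eq_mul]
  have hvb0 : volume (ballC p 1) ≠ 0 := (volume_ballC_pos p one_pos).ne'
  have hvbt : volume (ballC p 1) ≠ ⊤ := (volume_ballC_lt_top p 1).ne
  have hc1 : (c : ℝ≥0∞) = 1 := by
    calc (c : ℝ≥0∞) = c * volume (ballC p 1) * (volume (ballC p 1))⁻¹ := by
          rw [mul_assoc, ENNReal.mul_inv_cancel hvb0 hvbt, mul_one]
      _ = 1 := by rw [h2, ENNReal.mul_inv_cancel hvb0 hvbt]
  rw [← hLc, huniq, ENNReal.smul_def, hc1, one_smul]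

lemma slice_bound {q : ℕ} (r δ : ℝ) (hδ : 0 ≤ δ) (u : Fin (q + 1) → ℂ) (hu : 0 < vnorm2 u)
    (w : ℂ) :
    volume ({x : Fin (q + 1) → ℂ |
        ‖(∑ k, (starRingEnd ℂ) (x k) * u k) + w‖ < δ} ∩ ballC (q + 1) r)
      ≤ ENNReal.ofReal ((δ / vnorm2 u) ^ 2) * NNReal.pi * volume (ballC q r) := by
  set n : ℝ := vnorm2 u with hn
  set u' : EuclideanSpace ℂ (Fin (q + 1)) := (WithLp.equiv 2 (Fin (q + 1) → ℂ)).symm u with hu'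
  have hu'norm : ‖u'‖ = n := by
    rw [← vnorm2_eu u', hu', Equiv.apply_symm_apply]
  set e : EuclideanSpace ℂ (Fin (q + 1)) := ((n : ℂ))⁻¹ • u' with he
  have hne : (n : ℂ) ≠ 0 := by exact_mod_cast hu.ne'
  have henorm : ‖e‖ = 1 := by
    rw [he, norm_smul, hu'norm, norm_inv, Complex.norm_real, Real.norm_eq_abs,
      abs_of_pos hu, inv_mul_cancel₀ hu.ne']
  haveI : Subsingleton (({0} : Set (Fin (q + 1)))) := by
    refine ⟨fun a b => Subtype.ext ?_⟩
    have ha := a.2; have hb := b.2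
    simp only [Set.mem_singleton_iff] at ha hb
    rw [ha, hb]
  have horto : Orthonormal ℂ (Set.restrict {0} (fun _ : Fin (q + 1) => e)) := by
    constructor
    · intro i; exact henorm
    · intro i j hij; exact absurd (Subsingleton.elim i j) hij
  obtain ⟨B, hB⟩ := Orthonormal.exists_orthonormalBasis_extension_of_card_eq
    (card_ι := by simp) horto
  have hB0 : B 0 = e := hB 0 rfl
  have hkey : ∀ x : Fin (q + 1) → ℂ,
      (∑ k, (starRingEnd ℂ) (x k) * u k) = (n : ℂ) * (starRingEnd ℂ) (Lmap B x 0) := by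
    intro x
    have h1 : Lmap B x 0 = inner ℂ (B 0) ((WithLp.equiv 2 (Fin (q + 1) → ℂ)).symm x) := by
      rw [Lmap_apply, ← OrthonormalBasis.repr_apply_apply]
      rfl
    rw [h1, hB0, he, inner_smul_left]
    have h2 : (inner ℂ u' ((WithLp.equiv 2 (Fin (q+1) → ℂ)).symm x) : ℂ)
        = ∑ k, (starRingEnd ℂ) (u k) * x k := by
      rw [PiLp.inner_apply]
      simp only [RCLike.inner_apply']
      rfl
    rw [map_mul, Complex.conj_conj, h2, map_sum, Finset.mul_sum, Finset.mul_sum]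
    refine Finset.sum_congr rfl fun k _ => ?_
    rw [map_mul, Complex.conj_conj]
    rw [← mul_assoc, mul_inv_cancel₀ hne, one_mul, mul_comm]
  set D : Set ℂ := {z : ℂ | ‖(n:ℂ) * (starRingEnd ℂ) z + w‖ < δ} with hD
  have hDball : D = Metric.ball (-((starRingEnd ℂ) w) / (n:ℂ)) (δ / n) := by
    ext z
    have h1 : (n:ℂ) * (starRingEnd ℂ) z + w
        = (starRingEnd ℂ) ((n:ℂ) * z + (starRingEnd ℂ) w) := by
      rw [map_add, map_mul, Complex.conj_conj, Complex.conj_ofReal]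
    have h2 : (n:ℂ) * z + (starRingEnd ℂ) w
        = (n:ℂ) * (z - (-((starRingEnd ℂ) w) / (n:ℂ))) := by
      field_simp
      ring
    simp only [hD, Set.mem_setOf_eq, h1, Complex.norm_conj, h2, norm_mul, Complex.norm_real, Real.norm_eq_abs,
      abs_of_pos hu, Metric.mem_ball, Complex.dist_eq]
    rw [mul_comm]
    exact (lt_div_iff₀ hu).symm
  have hset : {x : Fin (q+1) → ℂ | ‖(∑ k, (starRingEnd ℂ) (x k) * u k) + w‖ < δ}
      ∩ ballC (q+1) r
      = ⇑(Lmap B) ⁻¹' ({y : Fin (q+1) → ℂ | y 0 ∈ D} ∩ ballC (q+1) r) := by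
    ext x
    simp only [Set.mem_inter_iff, Set.mem_setOf_eq, Set.mem_preimage, hD, ballC,
      hkey x, vnorm2_Lmap]
  rw [hset]
  have hmeasD : MeasurableSet D := by rw [hDball]; exact measurableSet_ball
  have hmeasW : MeasurableSet ({y : Fin (q+1) → ℂ | y 0 ∈ D} ∩ ballC (q+1) r) :=
    (hmeasD.preimage (measurable_pi_apply 0)).inter measurableSet_ballC
  have hL : Measurable ⇑(Lmap B) := (Lmap B).toContinuousLinearEquiv.continuous.measurable
  have hvolW : volume (⇑(Lmap B) ⁻¹' ({y : Fin (q+1) → ℂ | y 0 ∈ D} ∩ ballC (q+1) r))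
      = volume ({y : Fin (q+1) → ℂ | y 0 ∈ D} ∩ ballC (q+1) r) := by
    conv_rhs => rw [← map_Lmap_volume B]
    rw [Measure.map_apply hL hmeasW]
  rw [hvolW]
  have hsub : {y : Fin (q+1) → ℂ | y 0 ∈ D} ∩ ballC (q+1) r ⊆
      (MeasurableEquiv.piFinSuccAbove (fun _ : Fin (q+1) => ℂ) 0) ⁻¹' (D ×ˢ ballC q r) := by
    intro y hy
    have hey : (MeasurableEquiv.piFinSuccAbove (fun _ : Fin (q+1) => ℂ) 0) y
        = (y 0, fun j => y ((0:Fin (q+1)).succAbove j)) := rfl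
    refine Set.mem_preimage.mpr ?_
    rw [hey]
    refine Set.mem_prod.mpr ⟨hy.1, ?_⟩
    show vnorm2 (fun j => y ((0:Fin (q+1)).succAbove j)) ≤ r
    have hmono : ∑ j : Fin q, ‖y ((0:Fin (q+1)).succAbove j)‖ ^ 2
        ≤ ∑ i : Fin (q+1), ‖y i‖ ^ 2 := by
      rw [Fin.sum_univ_succ]
      simp only [Fin.succAbove_zero]
      exact le_add_of_nonneg_left (sq_nonneg _)
    exact le_trans (Real.sqrt_le_sqrt hmono) hy.2
  refine le_trans (measure_mono hsub) ?_
  have hpres := volume_preserving_piFinSuccAbove (fun _ : Fin (q+1) => ℂ) 0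
  rw [hpres.measure_preimage ((hmeasD.prod measurableSet_ballC).nullMeasurableSet)]
  rw [show (volume : Measure (ℂ × (Fin q → ℂ))) = (volume : Measure ℂ).prod volume from rfl]
  rw [Measure.prod_prod, hDball, Complex.volume_ball, ENNReal.ofReal_pow (by positivity)]
theorem stmt19 {Ω : Type} [MeasureSpace Ω] [IsProbabilityMeasure (ℙ : Measure Ω)]
    {p m : ℕ} (r : ℝ) (hr : 0 < r)
    (a : Fin m → Ω → (Fin p → ℂ)) (hmeas : ∀ i, Measurable (a i))
    (hindep : iIndepFun a ℙ)
    (hdist : ∀ i, Measure.map (a i) ℙ = (volume[|ballC p r]))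
    (u : Fin p → ℂ) (hu : u ≠ 0) (v : Fin m → ℂ) (δ : ℝ) (hδ : 0 < δ) :
    ℙ {ω : Ω | vnorm2 (fun i => (∑ k, (starRingEnd ℂ) (a i ω k) * u k) + v i) < δ}
      ≤ ENNReal.ofReal ((Real.pi * Vball (p - 1) r / Vball p r) ^ m *
          δ ^ (2 * m) / vnorm2 u ^ (2 * m)) := by
  classical
  have hp : p ≠ 0 := by
    rintro rfl
    exact hu (funext fun i => i.elim0)
  obtain ⟨q, rfl⟩ := Nat.exists_eq_succ_of_ne_zero hp
  have hnpos : 0 < vnorm2 u := by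
    rcases Function.ne_iff.mp hu with ⟨k, hk⟩
    have hk' : (0:ℝ) < ‖u k‖ ^ 2 := pow_pos (norm_pos_iff.mpr hk) 2
    exact Real.sqrt_pos.mpr
      (Finset.sum_pos' (fun i _ => sq_nonneg _) ⟨k, Finset.mem_univ k, hk'⟩)
  set n := vnorm2 u with hn
  set S : Fin m → Set (Fin (q+1) → ℂ) := fun i =>
    {x | ‖(∑ k, (starRingEnd ℂ) (x k) * u k) + v i‖ < δ} with hSdef
  have hSmeas : ∀ i, MeasurableSet (S i) := by
    intro i
    have hcont : Continuous fun x : Fin (q+1) → ℂ =>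
        ‖(∑ k, (starRingEnd ℂ) (x k) * u k) + v i‖ := by
      refine continuous_norm.comp ?_
      refine Continuous.add ?_ continuous_const
      exact continuous_finset_sum _ fun k _ =>
        (Complex.continuous_conj.comp (continuous_apply k)).mul continuous_const
    exact hcont.measurable measurableSet_Iio
  have hsub : {ω : Ω | vnorm2 (fun i => (∑ k, (starRingEnd ℂ) (a i ω k) * u k) + v i) < δ}
      ⊆ ⋂ i, a i ⁻¹' S i := by
    intro ω hω
    refine Set.mem_iInter.mpr fun i => Set.mem_preimage.mpr ?_
    show ‖(∑ k, (starRingEnd ℂ) ((a i ω) k) * u k) + v i‖ < δ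
    exact lt_of_le_of_lt
      (abs_le_vnorm2 (fun j => (∑ k, (starRingEnd ℂ) (a j ω k) * u k) + v j) i) hω
  refine le_trans (measure_mono hsub) ?_
  rw [hindep.meas_iInter (fun i => ⟨S i, hSmeas i, rfl⟩)]
  have hvb0 : volume (ballC (q+1) r) ≠ 0 := (volume_ballC_pos _ hr).ne'
  have hvbt : volume (ballC (q+1) r) ≠ ⊤ := (volume_ballC_lt_top _ r).ne
  have hvqt : volume (ballC q r) ≠ ⊤ := (volume_ballC_lt_top q r).ne
  have hfac : ∀ i, ℙ (a i ⁻¹' S i)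
      ≤ (volume (ballC (q+1) r))⁻¹ *
        (ENNReal.ofReal ((δ / n) ^ 2) * NNReal.pi * volume (ballC q r)) := by
    intro i
    rw [← Measure.map_apply (hmeas i) (hSmeas i), hdist i,
      ProbabilityTheory.cond_apply measurableSet_ballC]
    refine mul_le_mul_right ?_ _
    rw [Set.inter_comm]
    exact slice_bound r δ hδ.le u hnpos (v i)
  refine le_trans (Finset.prod_le_prod' fun i _ => hfac i) ?_
  rw [Finset.prod_const, Finset.card_univ, Fintype.card_fin]
  -- arithmetic
  have hVp_pos : 0 < Vball (q+1) r := ENNReal.toReal_pos hvb0 hvbt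
  have hVq_nonneg : 0 ≤ Vball q r := ENNReal.toReal_nonneg
  have hvol_p : volume (ballC (q+1) r) = ENNReal.ofReal (Vball (q+1) r) :=
    (ENNReal.ofReal_toReal hvbt).symm
  have hvol_q : volume (ballC q r) = ENNReal.ofReal (Vball q r) :=
    (ENNReal.ofReal_toReal hvqt).symm
  have hpi : (NNReal.pi : ℝ≥0∞) = ENNReal.ofReal Real.pi := by
    rw [← ENNReal.ofReal_coe_nnreal, NNReal.coe_real_pi]
  have hq1 : (q + 1) - 1 = q := by omega
  rw [hq1, hvol_p, hvol_q, hpi, ← ENNReal.ofReal_inv_of_pos hVp_pos,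
    ← ENNReal.ofReal_mul (by positivity), ← ENNReal.ofReal_mul (by positivity),
    ← ENNReal.ofReal_mul (by positivity), ← ENNReal.ofReal_pow (by positivity)]
  refine ENNReal.ofReal_le_ofReal (le_of_eq ?_)
  rw [show (Vball (q+1) r)⁻¹ * ((δ / n) ^ 2 * Real.pi * Vball q r)
      = (Real.pi * Vball q r / Vball (q+1) r) * (δ / n) ^ 2 by ring]
  rw [mul_pow, ← pow_mul, div_pow, mul_div_assoc, div_pow]
end
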